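/- arXiv:1201.6441 — 3 statements merged into one kernel-verified Lean document; each statement's English description precedes it below -/
import Mathlib

section
/- Let Λ₂ be the (r+1)-by-(r+1) matrix whose 0th row is δ_0 and whose ith row is ν_i for i = 1,…,r. Then Λ₂ is a stochastic matrix and: Λ₂ P*_abs = P̂ Λ₂; π* = π̂ Λ₂; and Λ₂ δ_0ᵀ = δ_0ᵀ (i.e., Λ₂(0,0) = 1 and Λ₂(i,0) = 0 for i ≥ 1). Thus (π*, P*_abs) and (π̂, P̂) are intertwined by the link Λ₂. -/
set_option linter.unusedSectionVars false
set_option linter.unusedTactic false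
set_option maxHeartbeats 1000000


open Matrix

/-- `ρ_i = (1−γ_i)/(1−λ_i)`. -/
noncomputable def rho (γ lam : ℕ → ℝ) (i : ℕ) : ℝ := (1 - γ i) / (1 - lam i)

/-- The row vector `π*_k ∈ ℝ^{r+1}`. -/
noncomputable def pistar (γ lam : ℕ → ℝ) (k i : ℕ) : ℝ :=
  if i = 0 then ∏ j ∈ Finset.Icc 1 k, rho γ lam j
  else if i ≤ k then
    (1 - rho γ lam i) *
      ∏ j ∈ (Finset.Icc 1 k).erase i, ((1 - γ j - rho γ lam j * (1 - γ i)) / (γ i - γ j))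
  else 0

/-- The star-chain transition matrix `P*`. -/
noncomputable def Pstar (r : ℕ) (γ lam : ℕ → ℝ) : Matrix (Fin (r + 1)) (Fin (r + 1)) ℝ :=
  Matrix.of fun i j =>
    if i.val = 0 then
      (if j.val = 0 then
        1 - (∑ l ∈ Finset.Icc 1 r, (1 - γ l) * pistar γ lam r l) / pistar γ lam r 0
      else (1 - γ j.val) * pistar γ lam r j.val / pistar γ lam r 0)
    else if j = i then γ i.val
    else if j.val = 0 then 1 - γ i.val
    else 0

/-- `P*` with row `0` replaced by `δ_0` (state `0` made absorbing). -/
noncomputable def PstarAbs (r : ℕ) (γ lam : ℕ → ℝ) : Matrix (Fin (r + 1)) (Fin (r + 1)) ℝ :=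
  Matrix.updateRow (Pstar r γ lam) 0 (fun j => if j = 0 then 1 else 0)

/-- The row vector `ν_i ∈ ℝ^{r+1}`. -/
noncomputable def nuvec (γ lam : ℕ → ℝ) (i j : ℕ) : ℝ :=
  if 1 ≤ j ∧ j ≤ i then (1 - γ i) * pistar γ lam i j / (1 - γ i - rho γ lam i * (1 - γ j))
  else 0

/-- The row vector `π̂_k ∈ ℝ^{r+1}`. -/
noncomputable def pihat (γ lam : ℕ → ℝ) (k j : ℕ) : ℝ :=
  if j = 0 then ∏ i ∈ Finset.Icc 1 k, rho γ lam i
  else if j < k then (∏ i ∈ Finset.Icc (j + 1) k, rho γ lam i) * (1 - rho γ lam j)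
  else if j = k then 1 - rho γ lam k
  else 0

/-- The dual transition matrix `P̂`. -/
noncomputable def PhatM (r : ℕ) (γ lam : ℕ → ℝ) : Matrix (Fin (r + 1)) (Fin (r + 1)) ℝ :=
  Matrix.of fun i j =>
    if i.val = 0 then (if j.val = 0 then 1 else 0)
    else if j = i then γ i.val
    else if j.val < i.val then (1 - γ i.val) * pihat γ lam (i.val - 1) j.val
    else 0

/-- The matrix `Λ₂` whose `0`th row is `δ_0` and whose `i`th row is `ν_i` for
`i = 1,…,r`. -/
noncomputable def Lambda2 (r : ℕ) (γ lam : ℕ → ℝ) : Matrix (Fin (r + 1)) (Fin (r + 1)) ℝ :=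
  Matrix.of fun i j =>
    if i.val = 0 then (if j.val = 0 then 1 else 0) else nuvec γ lam i.val j.val


section Aux
open Polynomial Finset in


private lemma lagrange_key (S : Finset ℕ) (v ρ c : ℕ → ℝ)
    (hinj : Set.InjOn v S) (hρ : ∀ l ∈ S, ρ l ≠ 0) (x : ℝ) :
    ∏ l ∈ S, (ρ l * (x - v l) + c l)
      = (∏ l ∈ S, ρ l) * ∏ l ∈ S, (x - v l)
        + ∑ j ∈ S, (∏ l ∈ S, (ρ l * (v j - v l) + c l)) *
            ∏ l ∈ S.erase j, ((v j - v l)⁻¹ * (x - v l)) := by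
  rcases S.eq_empty_or_nonempty with rfl | hS
  · simp
  set p1 : ℝ[X] := ∏ l ∈ S, (C (ρ l) * X + C (c l - ρ l * v l)) with hp1
  set p2 : ℝ[X] := C (∏ l ∈ S, ρ l) * ∏ l ∈ S, (X - C (v l)) with hp2
  have hfac : ∀ l ∈ S, (C (ρ l) * X + C (c l - ρ l * v l)).degree = 1 := by
    intro l hl; exact degree_linear (hρ l hl)
  have hd1 : p1.degree = S.card := by
    rw [hp1, degree_prod]
    rw [Finset.sum_congr rfl hfac]
    simp
  have hd2 : p2.degree = S.card := by
    have h0 : (∏ l ∈ S, ρ l) ≠ 0 := Finset.prod_ne_zero_iff.2 hρ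
    rw [hp2, degree_mul, degree_C h0, degree_prod]
    simp [degree_X_sub_C]
  have hlc1 : p1.leadingCoeff = ∏ l ∈ S, ρ l := by
    rw [hp1, leadingCoeff_prod]
    exact Finset.prod_congr rfl fun l hl => leadingCoeff_linear (hρ l hl)
  have hlc2 : p2.leadingCoeff = ∏ l ∈ S, ρ l := by
    rw [hp2, leadingCoeff_mul, leadingCoeff_C]
    rw [leadingCoeff_prod]
    simp [Monic.leadingCoeff, monic_X_sub_C]
  have hp1ne : p1 ≠ 0 := by
    intro h; rw [h] at hd1; simp at hd1
  have hqlt : (p1 - p2).degree < (S.card : WithBot ℕ) := by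
    calc (p1 - p2).degree < p1.degree := degree_sub_lt (hd1.trans hd2.symm) hp1ne (hlc1.trans hlc2.symm)
    _ = S.card := hd1
  have hint := Lagrange.eq_interpolate hinj hqlt
  have heval := congrArg (Polynomial.eval x) hint
  have hevalb : ∀ j ∈ S, (Lagrange.basis S v j).eval x
      = ∏ l ∈ S.erase j, ((v j - v l)⁻¹ * (x - v l)) := by
    intro j hj
    rw [Lagrange.basis, eval_prod]
    exact Finset.prod_congr rfl fun l hl => by
      simp [Lagrange.basisDivisor]
  have hp2j : ∀ j ∈ S, p2.eval (v j) = 0 := by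
    intro j hj
    rw [hp2, eval_mul, eval_prod]
    have : ∏ l ∈ S, ((X : ℝ[X]) - C (v l)).eval (v j) = 0 :=
      Finset.prod_eq_zero hj (by simp)
    rw [this, mul_zero]
  have hp1e : ∀ t : ℝ, p1.eval t = ∏ l ∈ S, (ρ l * (t - v l) + c l) := by
    intro t
    rw [hp1, eval_prod]
    exact Finset.prod_congr rfl fun l hl => by simp; ring
  have hp2e : p2.eval x = (∏ l ∈ S, ρ l) * ∏ l ∈ S, (x - v l) := by
    rw [hp2, eval_mul, eval_C, eval_prod]; simp
  rw [eval_sub, Lagrange.interpolate_apply, eval_finset_sum] at heval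
  simp only [eval_mul, eval_C, eval_sub] at heval
  rw [hp1e, hp2e] at heval
  have : ∀ j ∈ S, (p1.eval (v j) - p2.eval (v j)) * (Lagrange.basis S v j).eval x
      = (∏ l ∈ S, (ρ l * (v j - v l) + c l)) * ∏ l ∈ S.erase j, ((v j - v l)⁻¹ * (x - v l)) := by
    intro j hj
    rw [hp2j j hj, sub_zero, hp1e, hevalb j hj]
  rw [Finset.sum_congr rfl this] at heval
  linarith [heval]

end Aux

open Finset
set_option linter.unusedSectionVars false
set_option linter.unusedTactic false

section Setup
variable {r : ℕ} {γ lam : ℕ → ℝ}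

/-- `num l j = 1 - γ l - ρ l (1 - γ j)`. -/
noncomputable def nm (γ lam : ℕ → ℝ) (l j : ℕ) : ℝ := 1 - γ l - rho γ lam l * (1 - γ j)

variable (hlam0 : lam 0 = 1)
  (hinter : ∀ i : ℕ, 1 ≤ i → i ≤ r → lam (i - 1) > γ i ∧ γ i > lam i)
  (hlamr : 0 ≤ lam r)

include hinter in
lemma lam_anti : ∀ j, j ≤ r → ∀ i, i ≤ j → lam j ≤ lam i := by
  intro j
  induction j with
  | zero => intro _ i hi; interval_cases i; rfl
  | succ n ih =>
    intro hn i hi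
    rcases Nat.eq_or_lt_of_le hi with rfl | hlt
    · rfl
    · have h1 := hinter (n+1) (by omega) hn
      have h2 : lam n ≤ lam i := ih (by omega) i (by omega)
      have : n + 1 - 1 = n := by omega
      rw [this] at h1
      linarith [h1.1, h1.2]

include hinter hlamr in
lemma lam_nonneg : ∀ i, i ≤ r → 0 ≤ lam i := by
  intro i hi
  have := lam_anti hinter r le_rfl i hi
  linarith

include hinter hlamr in
lemma gamma_pos : ∀ i, 1 ≤ i → i ≤ r → 0 < γ i := by
  intro i h1 h2
  have := (hinter i h1 h2).2
  have := lam_nonneg hinter hlamr i h2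
  linarith

include hlam0 hinter in
lemma gamma_lt_one : ∀ i, 1 ≤ i → i ≤ r → γ i < 1 := by
  intro i h1 h2
  have h := (hinter i h1 h2).1
  have := lam_anti hinter (i-1) (by omega) 0 (by omega)
  rw [hlam0] at this
  linarith

include hinter in
lemma gamma_gt_lam : ∀ j l, 1 ≤ j → j ≤ l → l ≤ r → lam l < γ j := by
  intro j l h1 h2 h3
  have := lam_anti hinter l h3 j h2
  have := (hinter j h1 (le_trans h2 h3)).2
  linarith

include hinter in
lemma gamma_lt_lam : ∀ j l, 1 ≤ j → l < j → j ≤ r → γ j < lam l := by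
  intro j l h1 h2 h3
  have h := (hinter j h1 h3).1
  have := lam_anti hinter (j-1) (by omega) l (by omega)
  linarith

include hinter in
lemma gamma_anti : ∀ j l, 1 ≤ j → j < l → l ≤ r → γ l < γ j := by
  intro j l h1 h2 h3
  have := gamma_lt_lam hinter l j (by omega) h2 h3
  have := gamma_gt_lam hinter j j h1 le_rfl (by omega)
  have := lam_anti hinter j (by omega) j le_rfl
  calc γ l < lam j := gamma_lt_lam hinter l j (by omega) h2 h3
  _ < γ j := gamma_gt_lam hinter j j h1 le_rfl (by omega)

include hlam0 hinter hlamr in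
lemma one_sub_lam_pos : ∀ i, 1 ≤ i → i ≤ r → 0 < 1 - lam i := by
  intro i h1 hi
  have h := gamma_lt_one hlam0 hinter i h1 hi
  have := (hinter i h1 hi).2
  linarith

include hlam0 hinter hlamr in
lemma rho_pos : ∀ i, 1 ≤ i → i ≤ r → 0 < rho γ lam i := by
  intro i h1 h2
  have := one_sub_lam_pos hlam0 hinter hlamr i h1 h2
  have := gamma_lt_one hlam0 hinter i h1 h2
  exact div_pos (by linarith) (by linarith)

include hlam0 hinter hlamr in
lemma rho_lt_one : ∀ i, 1 ≤ i → i ≤ r → rho γ lam i < 1 := by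
  intro i h1 h2
  have := one_sub_lam_pos hlam0 hinter hlamr i h1 h2
  have := (hinter i h1 h2).2
  rw [rho, div_lt_one (by linarith)]
  linarith

include hlam0 hinter hlamr in
lemma nm_eq : ∀ l j, 1 ≤ l → l ≤ r → nm γ lam l j = (1 - γ l) * (γ j - lam l) / (1 - lam l) := by
  intro l j h1 h2
  have h := one_sub_lam_pos hlam0 hinter hlamr l h1 h2
  rw [nm, rho]
  field_simp
  ring

include hlam0 hinter hlamr in
lemma nm_pos : ∀ l j, 1 ≤ j → j ≤ l → l ≤ r → 0 < nm γ lam l j := by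
  intro l j h1 h2 h3
  rw [nm_eq hlam0 hinter hlamr l j (by omega) h3]
  have hl := one_sub_lam_pos hlam0 hinter hlamr l (by omega) h3
  have := gamma_lt_one hlam0 hinter l (by omega) h3
  have := gamma_gt_lam hinter j l h1 h2 h3
  exact div_pos (mul_pos (by linarith) (by linarith)) hl

include hlam0 hinter hlamr in
lemma nm_neg : ∀ l j, 1 ≤ l → l < j → j ≤ r → nm γ lam l j < 0 := by
  intro l j h1 h2 h3
  rw [nm_eq hlam0 hinter hlamr l j h1 (by omega)]
  have hl := one_sub_lam_pos hlam0 hinter hlamr l h1 (by omega)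
  have h4 := gamma_lt_one hlam0 hinter l h1 (by omega)
  have h5 := gamma_lt_lam hinter j l (by omega) h2 h3
  apply div_neg_of_neg_of_pos _ hl
  apply mul_neg_of_pos_of_neg (by linarith) (by linarith)

include hlam0 hinter hlamr in
lemma f_pos : ∀ l j, 1 ≤ l → l ≤ r → 1 ≤ j → j ≤ r → l ≠ j →
    0 < nm γ lam l j / (γ j - γ l) := by
  intro l j h1 h2 h3 h4 h5
  rcases Nat.lt_or_ge l j with h | h
  · apply div_pos_of_neg_of_neg (nm_neg hlam0 hinter hlamr l j h1 h h4)
    have := gamma_anti hinter l j h1 h h4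
    linarith
  · have hlj : j < l := by omega
    apply div_pos (nm_pos hlam0 hinter hlamr l j h3 (by omega) h2)
    have := gamma_anti hinter j l h3 hlj h2
    linarith

lemma pistar_zero (k : ℕ) : pistar γ lam k 0 = ∏ l ∈ Icc 1 k, rho γ lam l := by
  simp [pistar]

lemma pistar_eq {j k : ℕ} (h1 : 1 ≤ j) (hjk : j ≤ k) :
    pistar γ lam k j
      = (1 - rho γ lam j) * ∏ l ∈ (Icc 1 k).erase j, (nm γ lam l j / (γ j - γ l)) := by
  rw [pistar, if_neg (by omega), if_pos hjk]
  rfl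

include hlam0 hinter hlamr in
lemma pistar_pos {j k : ℕ} (h1 : 1 ≤ j) (hjk : j ≤ k) (hk : k ≤ r) :
    0 < pistar γ lam k j := by
  rw [pistar_eq h1 hjk]
  have hρ := rho_lt_one hlam0 hinter hlamr j h1 (by omega)
  apply mul_pos (by linarith)
  apply Finset.prod_pos
  intro l hl
  rw [Finset.mem_erase, Finset.mem_Icc] at hl
  exact f_pos hlam0 hinter hlamr l j (by omega) (by omega) h1 (by omega) hl.1

include hlam0 hinter hlamr in
lemma pistar_zero_pos {k : ℕ} (hk : k ≤ r) : 0 < pistar γ lam k 0 := by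
  rw [pistar_zero]
  apply Finset.prod_pos
  intro l hl
  rw [Finset.mem_Icc] at hl
  exact rho_pos hlam0 hinter hlamr l hl.1 (by omega)

include hlam0 hinter in
lemma gamma_inj {m : ℕ} (hm : m ≤ r) : Set.InjOn γ (Icc 1 m : Finset ℕ) := by
  intro a ha b hb hab
  simp only [Finset.coe_Icc, Set.mem_Icc] at ha hb
  by_contra hne
  rcases Nat.lt_or_ge a b with h | h
  · have := gamma_anti hinter a b ha.1 h (by omega); linarith [this, hab.le]
  · have hba : b < a := by omega
    have := gamma_anti hinter b a hb.1 hba (by omega); linarith [this, hab.ge]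

include hlam0 hinter hlamr in
lemma keyId {m : ℕ} (hm : m ≤ r) (x : ℝ) :
    ∏ l ∈ Icc 1 m, (1 - γ l - rho γ lam l * (1 - x))
      = (∏ l ∈ Icc 1 m, rho γ lam l) * ∏ l ∈ Icc 1 m, (x - γ l)
        + ∑ j ∈ Icc 1 m, (1 - γ j) * pistar γ lam m j * ∏ l ∈ (Icc 1 m).erase j, (x - γ l) := by
  have hρ : ∀ l ∈ Icc 1 m, rho γ lam l ≠ 0 := by
    intro l hl; rw [Finset.mem_Icc] at hl
    exact ne_of_gt (rho_pos hlam0 hinter hlamr l hl.1 (by omega))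
  have h := lagrange_key (Icc 1 m) γ (rho γ lam)
    (fun l => (1 - rho γ lam l) * (1 - γ l)) (gamma_inj hlam0 hinter hm) hρ x
  have hL : ∏ l ∈ Icc 1 m, (rho γ lam l * (x - γ l) + (1 - rho γ lam l) * (1 - γ l))
      = ∏ l ∈ Icc 1 m, (1 - γ l - rho γ lam l * (1 - x)) :=
    Finset.prod_congr rfl fun l _ => by ring
  have hterm : ∀ j ∈ Icc 1 m,
      (∏ l ∈ Icc 1 m, (rho γ lam l * (γ j - γ l) + (1 - rho γ lam l) * (1 - γ l))) *
          ∏ l ∈ (Icc 1 m).erase j, ((γ j - γ l)⁻¹ * (x - γ l))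
        = (1 - γ j) * pistar γ lam m j * ∏ l ∈ (Icc 1 m).erase j, (x - γ l) := by
    intro j hj
    have hj' := Finset.mem_Icc.mp hj
    have hnm : ∀ l, rho γ lam l * (γ j - γ l) + (1 - rho γ lam l) * (1 - γ l) = nm γ lam l j := by
      intro l; rw [nm, rho]; ring
    rw [Finset.prod_congr rfl fun l _ => hnm l, ← Finset.mul_prod_erase _ _ hj,
      Finset.prod_mul_distrib, pistar_eq hj'.1 hj'.2]
    have hjj : nm γ lam j j = (1 - γ j) * (1 - rho γ lam j) := by rw [nm]; ring
    have hd : ∏ l ∈ (Icc 1 m).erase j, (nm γ lam l j / (γ j - γ l))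
        = (∏ l ∈ (Icc 1 m).erase j, nm γ lam l j) *
            ∏ l ∈ (Icc 1 m).erase j, (γ j - γ l)⁻¹ := by
      rw [← Finset.prod_mul_distrib]
      exact Finset.prod_congr rfl fun l _ => div_eq_mul_inv _ _
    rw [hjj, hd]
    ring
  rw [hL, Finset.sum_congr rfl hterm] at h
  exact h

include hlam0 hinter hlamr in
lemma sumPistar {k : ℕ} (hk : k ≤ r) :
    ∑ j ∈ Icc 1 k, pistar γ lam k j = 1 - ∏ l ∈ Icc 1 k, rho γ lam l := by
  have h := keyId hlam0 hinter hlamr hk 1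
  have hQ : (0:ℝ) < ∏ l ∈ Icc 1 k, (1 - γ l) := by
    apply Finset.prod_pos
    intro l hl; rw [Finset.mem_Icc] at hl
    have := gamma_lt_one hlam0 hinter l hl.1 (by omega); linarith
  have h1 : ∏ l ∈ Icc 1 k, (1 - γ l - rho γ lam l * (1 - 1)) = ∏ l ∈ Icc 1 k, (1 - γ l) :=
    Finset.prod_congr rfl fun l _ => by ring
  have h2 : ∀ j ∈ Icc 1 k, (1 - γ j) * pistar γ lam k j * ∏ l ∈ (Icc 1 k).erase j, (1 - γ l)
      = pistar γ lam k j * ∏ l ∈ Icc 1 k, (1 - γ l) := by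
    intro j hj
    rw [← Finset.mul_prod_erase _ _ hj]; ring
  rw [h1, Finset.sum_congr rfl h2, ← Finset.sum_mul] at h
  have h3 : (∑ j ∈ Icc 1 k, pistar γ lam k j) * (∏ l ∈ Icc 1 k, (1 - γ l))
      = (1 - ∏ l ∈ Icc 1 k, rho γ lam l) * (∏ l ∈ Icc 1 k, (1 - γ l)) := by
    linarith
  exact mul_right_cancel₀ (ne_of_gt hQ) h3

include hlam0 hinter hlamr in
lemma pistar_succ {j k : ℕ} (h1 : 1 ≤ j) (hjk : j ≤ k) (hk : k + 1 ≤ r) :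
    pistar γ lam (k+1) j * (γ j - γ (k+1)) = pistar γ lam k j * nm γ lam (k+1) j := by
  rw [pistar_eq h1 (by omega), pistar_eq h1 hjk]
  have hst : (Icc 1 (k+1)).erase j = insert (k+1) ((Icc 1 k).erase j) := by
    ext l; simp only [Finset.mem_erase, Finset.mem_Icc, Finset.mem_insert]; omega
  rw [hst, Finset.prod_insert (by simp only [Finset.mem_erase, Finset.mem_Icc]; omega)]
  have hne : γ j - γ (k+1) ≠ 0 := by
    have := gamma_anti hinter j (k+1) h1 (by omega) hk
    intro h; linarith [sub_eq_zero.mp h]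
  have hcan : nm γ lam (k+1) j / (γ j - γ (k+1)) * (γ j - γ (k+1)) = nm γ lam (k+1) j :=
    div_mul_cancel₀ _ hne
  calc (1 - rho γ lam j) *
        (nm γ lam (k+1) j / (γ j - γ (k+1)) * ∏ l ∈ (Icc 1 k).erase j, (nm γ lam l j / (γ j - γ l)))
        * (γ j - γ (k+1))
      = (1 - rho γ lam j) * (∏ l ∈ (Icc 1 k).erase j, (nm γ lam l j / (γ j - γ l)))
          * (nm γ lam (k+1) j / (γ j - γ (k+1)) * (γ j - γ (k+1))) := by ring
    _ = _ := by rw [hcan]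

include hlam0 hinter hlamr in
lemma nu_spec {j i : ℕ} (h1 : 1 ≤ j) (hji : j ≤ i) (hi : i ≤ r) :
    nuvec γ lam i j * nm γ lam i j = (1 - γ i) * pistar γ lam i j := by
  rw [nuvec, if_pos ⟨h1, hji⟩,
    show (1 - γ i - rho γ lam i * (1 - γ j)) = nm γ lam i j from rfl]
  exact div_mul_cancel₀ _ (ne_of_gt (nm_pos hlam0 hinter hlamr i j h1 hji hi))

include hlam0 hinter hlamr in
lemma nu_diag {i : ℕ} (h1 : 1 ≤ i) (hi : i ≤ r) :
    nuvec γ lam i i * (1 - rho γ lam i) = pistar γ lam i i := by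
  have h := nu_spec hlam0 hinter hlamr h1 le_rfl hi
  have hnm : nm γ lam i i = (1 - γ i) * (1 - rho γ lam i) := by rw [nm]; ring
  rw [hnm] at h
  have hg : (1:ℝ) - γ i ≠ 0 := by
    have := gamma_lt_one hlam0 hinter i h1 hi; linarith
  apply mul_left_cancel₀ hg
  linarith

include hlam0 hinter hlamr in
lemma erase_top {m : ℕ} : (Icc 1 (m+1)).erase (m+1) = Icc 1 m := by
  ext l; simp only [Finset.mem_erase, Finset.mem_Icc]; omega

include hlam0 hinter hlamr in
lemma nu_diag_prod {m : ℕ} (hm : m + 1 ≤ r) :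
    nuvec γ lam (m+1) (m+1) = ∏ l ∈ Icc 1 m, (nm γ lam l (m+1) / (γ (m+1) - γ l)) := by
  have h := nu_diag hlam0 hinter hlamr (by omega) hm
  rw [pistar_eq (by omega) le_rfl, erase_top hlam0 hinter hlamr] at h
  have hρ : (1:ℝ) - rho γ lam (m+1) ≠ 0 := by
    have := rho_lt_one hlam0 hinter hlamr (m+1) (by omega) hm; linarith
  apply mul_right_cancel₀ hρ
  rw [h]; ring

include hlam0 hinter hlamr in
lemma nu_off {j k : ℕ} (h1 : 1 ≤ j) (hjk : j ≤ k) (hk : k + 1 ≤ r) :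
    nuvec γ lam (k+1) j * (γ j - γ (k+1)) = (1 - γ (k+1)) * pistar γ lam k j := by
  have h2 := nu_spec hlam0 hinter hlamr h1 (by omega : j ≤ k+1) hk
  have h3 := pistar_succ hlam0 hinter hlamr h1 hjk hk
  have hnm : nm γ lam (k+1) j ≠ 0 :=
    ne_of_gt (nm_pos hlam0 hinter hlamr (k+1) j h1 (by omega) hk)
  apply mul_right_cancel₀ hnm
  linear_combination (γ j - γ (k+1)) * h2 + (1 - γ (k+1)) * h3

include hlam0 hinter hlamr in
lemma AId {m : ℕ} (hm : m + 1 ≤ r) :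
    ∑ j ∈ Icc 1 (m+1), (1 - γ j) * nuvec γ lam (m+1) j
      = (1 - γ (m+1)) * ∏ l ∈ Icc 1 m, rho γ lam l := by
  have hDne : ∀ l ∈ Icc 1 m, γ (m+1) - γ l ≠ 0 := by
    intro l hl; rw [Finset.mem_Icc] at hl
    have := gamma_anti hinter l (m+1) hl.1 (by omega) hm
    intro h; linarith [sub_eq_zero.mp h]
  have hD : (∏ l ∈ Icc 1 m, (γ (m+1) - γ l)) ≠ 0 := Finset.prod_ne_zero_iff.mpr hDne
  have key : ∏ l ∈ Icc 1 m, nm γ lam l (m+1)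
      = (∏ l ∈ Icc 1 m, rho γ lam l) * ∏ l ∈ Icc 1 m, (γ (m+1) - γ l)
        + ∑ j ∈ Icc 1 m, (1 - γ j) * pistar γ lam m j *
            ∏ l ∈ (Icc 1 m).erase j, (γ (m+1) - γ l) :=
    keyId hlam0 hinter hlamr (by omega) (γ (m+1))
  apply mul_right_cancel₀ hD
  rw [Finset.sum_Icc_succ_top (by omega : 1 ≤ m + 1), add_mul, Finset.sum_mul]
  have hterm : ∀ j ∈ Icc 1 m,
      (1 - γ j) * nuvec γ lam (m+1) j * ∏ l ∈ Icc 1 m, (γ (m+1) - γ l)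
        = (-(1 - γ (m+1))) * ((1 - γ j) * pistar γ lam m j *
            ∏ l ∈ (Icc 1 m).erase j, (γ (m+1) - γ l)) := by
    intro j hj
    have hj' := Finset.mem_Icc.mp hj
    rw [← Finset.mul_prod_erase _ _ hj]
    linear_combination (-(1 - γ j) * ∏ l ∈ (Icc 1 m).erase j, (γ (m+1) - γ l)) *
      nu_off hlam0 hinter hlamr hj'.1 hj'.2 hm
  rw [Finset.sum_congr rfl hterm, ← Finset.mul_sum]
  have htop : (1 - γ (m+1)) * nuvec γ lam (m+1) (m+1) * ∏ l ∈ Icc 1 m, (γ (m+1) - γ l)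
      = (1 - γ (m+1)) * ∏ l ∈ Icc 1 m, nm γ lam l (m+1) := by
    rw [nu_diag_prod hlam0 hinter hlamr hm, mul_assoc, ← Finset.prod_mul_distrib]
    rw [Finset.prod_congr rfl fun l hl => div_mul_cancel₀ (nm γ lam l (m+1)) (hDne l hl)]
  rw [htop]
  linear_combination (1 - γ (m+1)) * key

include hlam0 hinter hlamr in
lemma rowSum {m : ℕ} (hm : m + 1 ≤ r) :
    ∑ j ∈ Icc 1 (m+1), nuvec γ lam (m+1) j = 1 := by
  have hA := AId hlam0 hinter hlamr hm
  have hS := sumPistar hlam0 hinter hlamr hm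
  have hsplit : ∏ l ∈ Icc 1 (m+1), rho γ lam l
      = (∏ l ∈ Icc 1 m, rho γ lam l) * rho γ lam (m+1) :=
    Finset.prod_Icc_succ_top (by omega) _
  have hpt : ∀ j ∈ Icc 1 (m+1),
      (1 - γ (m+1)) * pistar γ lam (m+1) j
        = (1 - γ (m+1)) * nuvec γ lam (m+1) j
            - rho γ lam (m+1) * ((1 - γ j) * nuvec γ lam (m+1) j) := by
    intro j hj
    have hj' := Finset.mem_Icc.mp hj
    have h := nu_spec hlam0 hinter hlamr hj'.1 hj'.2 hm
    rw [nm] at h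
    linear_combination -h
  have hsum : (1 - γ (m+1)) * ∑ j ∈ Icc 1 (m+1), pistar γ lam (m+1) j
      = (1 - γ (m+1)) * (∑ j ∈ Icc 1 (m+1), nuvec γ lam (m+1) j)
          - rho γ lam (m+1) * ∑ j ∈ Icc 1 (m+1), ((1 - γ j) * nuvec γ lam (m+1) j) := by
    rw [Finset.mul_sum, Finset.mul_sum, Finset.mul_sum, ← Finset.sum_sub_distrib]
    exact Finset.sum_congr rfl hpt
  rw [hS, hA, hsplit] at hsum
  have hg : (1:ℝ) - γ (m+1) ≠ 0 := by
    have := gamma_lt_one hlam0 hinter (m+1) (by omega) hm; linarith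
  apply mul_left_cancel₀ hg
  linear_combination -hsum

lemma pihat_zero (k : ℕ) : pihat γ lam k 0 = ∏ l ∈ Icc 1 k, rho γ lam l := by
  simp [pihat]

lemma pihat_succ {i k : ℕ} (h1 : 1 ≤ i) (hik : i ≤ k) :
    pihat γ lam (k+1) i = rho γ lam (k+1) * pihat γ lam k i := by
  rcases Nat.lt_or_ge i k with h | h
  · rw [pihat, if_neg (by omega), if_pos (by omega), pihat, if_neg (by omega), if_pos h,
      Finset.prod_Icc_succ_top (by omega : i + 1 ≤ k + 1)]
    ring
  · have hik' : i = k := by omega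
    subst hik'
    rw [pihat, if_neg (by omega), if_pos (by omega), pihat, if_neg (by omega),
      if_neg (lt_irrefl _), if_pos rfl]
    have : Icc (i+1) (i+1) = {i+1} := Finset.Icc_self _
    rw [this, Finset.prod_singleton]

lemma pihat_top (k : ℕ) (hk : 1 ≤ k) : pihat γ lam k k = 1 - rho γ lam k := by
  rw [pihat, if_neg (by omega), if_neg (lt_irrefl _), if_pos rfl]

include hlam0 hinter hlamr in
lemma piId {j : ℕ} (h1 : 1 ≤ j) :
    ∀ k, j ≤ k → k ≤ r →
      ∑ i ∈ Icc j k, pihat γ lam k i * nuvec γ lam i j = pistar γ lam k j := by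
  intro k hjk
  induction k, hjk using Nat.le_induction with
  | base =>
    intro hjr
    rw [Finset.Icc_self, Finset.sum_singleton, pihat_top j h1, mul_comm]
    exact nu_diag hlam0 hinter hlamr h1 hjr
  | succ k hk ih =>
    intro hkr
    rw [Finset.sum_Icc_succ_top (by omega : j ≤ k + 1)]
    have hre : ∀ i ∈ Icc j k, pihat γ lam (k+1) i * nuvec γ lam i j
        = rho γ lam (k+1) * (pihat γ lam k i * nuvec γ lam i j) := by
      intro i hi
      have hi' := Finset.mem_Icc.mp hi
      rw [pihat_succ (by omega) hi'.2]; ring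
    rw [Finset.sum_congr rfl hre, ← Finset.mul_sum, ih (by omega), pihat_top (k+1) (by omega)]
    have hne : γ j - γ (k+1) ≠ 0 := by
      have := gamma_anti hinter j (k+1) h1 (by omega) hkr
      intro h; linarith [sub_eq_zero.mp h]
    apply mul_right_cancel₀ hne
    have hA := nu_off hlam0 hinter hlamr h1 hk hkr
    have hB := pistar_succ hlam0 hinter hlamr h1 hk hkr
    rw [nm] at hB
    linear_combination (1 - rho γ lam (k+1)) * hA - hB

lemma nuvec_zero (i : ℕ) : nuvec γ lam i 0 = 0 := by
  rw [nuvec, if_neg]; omega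

lemma nuvec_gt {i j : ℕ} (h : i < j) : nuvec γ lam i j = 0 := by
  rw [nuvec, if_neg]; omega

include hlam0 hinter hlamr in
lemma nuvec_nonneg {i : ℕ} (h1 : 1 ≤ i) (hi : i ≤ r) (j : ℕ) : 0 ≤ nuvec γ lam i j := by
  rw [nuvec]
  split_ifs with h
  · have hγ := gamma_lt_one hlam0 hinter i h1 hi
    have hπ := pistar_pos hlam0 hinter hlamr h.1 h.2 hi
    have hnm := nm_pos hlam0 hinter hlamr i j h.1 h.2 hi
    rw [nm] at hnm
    exact le_of_lt (div_pos (mul_pos (by linarith) hπ) hnm)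
  · exact le_refl 0

lemma sum_fin (r : ℕ) (g : ℕ → ℝ) : ∑ k : Fin (r+1), g k.val = g 0 + ∑ k ∈ Icc 1 r, g k := by
  rw [Fin.sum_univ_eq_sum_range]
  have h : Finset.range (r+1) = insert 0 (Icc 1 r) := by
    ext l; simp only [Finset.mem_range, Finset.mem_insert, Finset.mem_Icc]; omega
  rw [h, Finset.sum_insert (by simp)]

lemma sum_restrict {r i : ℕ} (hi : i ≤ r) (g : ℕ → ℝ) (hg : ∀ k, i < k → g k = 0) :
    ∑ k ∈ Icc 1 r, g k = ∑ k ∈ Icc 1 i, g k := by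
  apply (Finset.sum_subset (Finset.Icc_subset_Icc_right hi) _).symm
  intro k hk hnk
  rw [Finset.mem_Icc] at hk hnk
  exact hg k (by omega)

lemma PstarAbs_apply (r : ℕ) (γ lam : ℕ → ℝ) (k j : Fin (r+1)) :
    PstarAbs r γ lam k j
      = if (k:ℕ) = 0 then (if (j:ℕ) = 0 then 1 else 0)
        else if (j:ℕ) = (k:ℕ) then γ k else if (j:ℕ) = 0 then 1 - γ k else 0 := by
  by_cases hk : (k:ℕ) = 0
  · have hk0 : k = 0 := by simpa using hk
    subst hk0
    rw [PstarAbs, Matrix.updateRow_self]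
    simp
  · have hk0 : k ≠ 0 := by simpa using hk
    rw [PstarAbs, Matrix.updateRow_ne hk0, Pstar]
    simp only [Matrix.of_apply, if_neg hk]
    simp [Fin.val_inj]

lemma PhatM_apply (r : ℕ) (γ lam : ℕ → ℝ) (i j : Fin (r+1)) :
    PhatM r γ lam i j
      = if (i:ℕ) = 0 then (if (j:ℕ) = 0 then 1 else 0)
        else if (j:ℕ) = (i:ℕ) then γ i
        else if (j:ℕ) < (i:ℕ) then (1 - γ i) * pihat γ lam (i - 1) j else 0 := by
  rw [PhatM]
  simp only [Matrix.of_apply]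
  congr 1
  simp [Fin.ext_iff]

lemma sum_restrict_bot {r j : ℕ} (hj : 1 ≤ j) (g : ℕ → ℝ) (hg : ∀ k, k < j → g k = 0) :
    ∑ k ∈ Icc 1 r, g k = ∑ k ∈ Icc j r, g k := by
  apply (Finset.sum_subset (Finset.Icc_subset_Icc_left hj) _).symm
  intro k hk hnk
  rw [Finset.mem_Icc] at hk hnk
  exact hg k (by omega)

lemma sum_if_zero (r : ℕ) (h : ℕ → ℝ) :
    ∑ k ∈ Icc 1 r, (if k = 0 then (1:ℝ) else 0) * h k = 0 :=
  Finset.sum_eq_zero fun k hk => by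
    rw [Finset.mem_Icc] at hk
    rw [if_neg (by omega), zero_mul]

end Setup

/-- `Λ₂` is a stochastic matrix, `Λ₂ P*_abs = P̂ Λ₂`, `π* = π̂ Λ₂`, and
`Λ₂ δ_0ᵀ = δ_0ᵀ`: the chains `(π*, P*_abs)` and `(π̂, P̂)` are intertwined by the link
`Λ₂`. -/
theorem stmt11 (r : ℕ) (hr : 1 ≤ r) (γ lam : ℕ → ℝ)
    (hlam0 : lam 0 = 1)
    (hinter : ∀ i : ℕ, 1 ≤ i → i ≤ r → lam (i - 1) > γ i ∧ γ i > lam i)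
    (hlamr : 0 ≤ lam r) :
    (∀ i j, 0 ≤ Lambda2 r γ lam i j) ∧
    (∀ i, ∑ j, Lambda2 r γ lam i j = 1) ∧
    (Lambda2 r γ lam * PstarAbs r γ lam = PhatM r γ lam * Lambda2 r γ lam) ∧
    ((fun i : Fin (r + 1) => pistar γ lam r i.val)
      = (fun i : Fin (r + 1) => pihat γ lam r i.val) ᵥ* Lambda2 r γ lam) ∧
    (∀ i : Fin (r + 1), Lambda2 r γ lam i 0 = if i = 0 then 1 else 0) := by
  refine ⟨?_, ?_, ?_, ?_, ?_⟩
  · -- nonnegativity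
    intro i j
    rw [Lambda2]
    simp only [Matrix.of_apply]
    split_ifs with h1 h2
    · norm_num
    · norm_num
    · have hiLt : (i:ℕ) < r + 1 := i.isLt
      exact nuvec_nonneg hlam0 hinter hlamr (by omega) (by omega) j.val
  · -- row sums
    intro i
    by_cases hi : (i:ℕ) = 0
    · have e : ∀ k : Fin (r+1), Lambda2 r γ lam i k
          = (fun kv => if kv = 0 then (1:ℝ) else 0) k.val := by
        intro k; rw [Lambda2]; simp only [Matrix.of_apply, if_pos hi]
      rw [Finset.sum_congr rfl (fun k _ => e k),
        sum_fin r (fun kv => if kv = 0 then (1:ℝ) else 0)]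
      rw [Finset.sum_eq_zero (fun k hk => by
        rw [Finset.mem_Icc] at hk; exact if_neg (by omega))]
      norm_num
    · have hiLt : (i:ℕ) < r + 1 := i.isLt
      obtain ⟨m, hm⟩ : ∃ m, (i:ℕ) = m + 1 := ⟨(i:ℕ) - 1, by omega⟩
      have e : ∀ k : Fin (r+1), Lambda2 r γ lam i k
          = (fun kv => nuvec γ lam (i:ℕ) kv) k.val := by
        intro k; rw [Lambda2]; simp only [Matrix.of_apply, if_neg hi]
      rw [Finset.sum_congr rfl (fun k _ => e k),
        sum_fin r (fun kv => nuvec γ lam (i:ℕ) kv)]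
      rw [nuvec_zero, sum_restrict (show (i:ℕ) ≤ r by omega) _ (fun k hk => nuvec_gt hk), hm,
        rowSum hlam0 hinter hlamr (by omega)]
      norm_num
  · -- intertwining
    ext i j
    have hiLt : (i:ℕ) < r + 1 := i.isLt
    have hjLt : (j:ℕ) < r + 1 := j.isLt
    have eL : ∀ k : Fin (r+1), Lambda2 r γ lam i k * PstarAbs r γ lam k j
        = (fun kv => (if (i:ℕ) = 0 then (if kv = 0 then (1:ℝ) else 0) else nuvec γ lam (i:ℕ) kv)
            * (if kv = 0 then (if (j:ℕ) = 0 then (1:ℝ) else 0)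
               else if (j:ℕ) = kv then γ kv else if (j:ℕ) = 0 then 1 - γ kv else 0)) k.val := by
      intro k
      rw [PstarAbs_apply, Lambda2]
      simp only [Matrix.of_apply]
    have eR : ∀ k : Fin (r+1), PhatM r γ lam i k * Lambda2 r γ lam k j
        = (fun kv => (if (i:ℕ) = 0 then (if kv = 0 then (1:ℝ) else 0)
              else if kv = (i:ℕ) then γ (i:ℕ)
              else if kv < (i:ℕ) then (1 - γ (i:ℕ)) * pihat γ lam ((i:ℕ) - 1) kv else 0)
            * (if kv = 0 then (if (j:ℕ) = 0 then (1:ℝ) else 0) else nuvec γ lam kv (j:ℕ))) k.val := by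
      intro k
      rw [PhatM_apply, Lambda2]
      simp only [Matrix.of_apply]
    rw [Matrix.mul_apply, Matrix.mul_apply,
      Finset.sum_congr rfl (fun k _ => eL k),
      Finset.sum_congr rfl (fun k _ => eR k),
      sum_fin r (fun kv => (if (i:ℕ) = 0 then (if kv = 0 then (1:ℝ) else 0) else nuvec γ lam (i:ℕ) kv)
            * (if kv = 0 then (if (j:ℕ) = 0 then (1:ℝ) else 0)
               else if (j:ℕ) = kv then γ kv else if (j:ℕ) = 0 then 1 - γ kv else 0)),
      sum_fin r (fun kv => (if (i:ℕ) = 0 then (if kv = 0 then (1:ℝ) else 0)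
              else if kv = (i:ℕ) then γ (i:ℕ)
              else if kv < (i:ℕ) then (1 - γ (i:ℕ)) * pihat γ lam ((i:ℕ) - 1) kv else 0)
            * (if kv = 0 then (if (j:ℕ) = 0 then (1:ℝ) else 0) else nuvec γ lam kv (j:ℕ)))]
    beta_reduce
    by_cases hi : (i:ℕ) = 0
    · simp [hi, sum_if_zero]
      rw [Finset.sum_eq_zero (fun x hx => by
          rw [Finset.mem_Icc] at hx
          simp [show ¬ x = 0 by omega]),
        Finset.sum_eq_zero (fun x hx => by
          rw [Finset.mem_Icc] at hx
          simp [show ¬ x = 0 by omega])]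
    · obtain ⟨m, hm⟩ : ∃ m, (i:ℕ) = m + 1 := ⟨(i:ℕ) - 1, by omega⟩
      have hmr : m + 1 ≤ r := by omega
      have hL1 : ∀ k ∈ Icc 1 r,
          (if (i:ℕ) = 0 then (if k = 0 then (1:ℝ) else 0) else nuvec γ lam (i:ℕ) k)
            * (if k = 0 then (if (j:ℕ) = 0 then (1:ℝ) else 0)
               else if (j:ℕ) = k then γ k else if (j:ℕ) = 0 then 1 - γ k else 0)
          = nuvec γ lam (i:ℕ) k *
              (if (j:ℕ) = k then γ k else if (j:ℕ) = 0 then 1 - γ k else 0) := by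
        intro k hk
        rw [Finset.mem_Icc] at hk
        rw [if_neg hi, if_neg (show ¬ k = 0 by omega)]
      have hR1 : ∀ k ∈ Icc 1 r,
          (if (i:ℕ) = 0 then (if k = 0 then (1:ℝ) else 0)
             else if k = (i:ℕ) then γ (i:ℕ)
             else if k < (i:ℕ) then (1 - γ (i:ℕ)) * pihat γ lam ((i:ℕ) - 1) k else 0)
            * (if k = 0 then (if (j:ℕ) = 0 then (1:ℝ) else 0) else nuvec γ lam k (j:ℕ))
          = (if k = (i:ℕ) then γ (i:ℕ)
             else if k < (i:ℕ) then (1 - γ (i:ℕ)) * pihat γ lam ((i:ℕ) - 1) k else 0)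
              * nuvec γ lam k (j:ℕ) := by
        intro k hk
        rw [Finset.mem_Icc] at hk
        rw [if_neg hi, if_neg (show ¬ k = 0 by omega)]
      rw [Finset.sum_congr rfl hL1, Finset.sum_congr rfl hR1]
      rw [if_neg hi, nuvec_zero, zero_mul, zero_add, if_neg hi,
        if_neg (show ¬ (0:ℕ) = (i:ℕ) by omega),
        if_pos (show (0:ℕ) < (i:ℕ) by omega), if_pos rfl]
      by_cases hj : (j:ℕ) = 0
      · have hL2 : ∀ k ∈ Icc 1 r,
            nuvec γ lam (i:ℕ) k *
                (if (j:ℕ) = k then γ k else if (j:ℕ) = 0 then 1 - γ k else 0)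
              = (1 - γ k) * nuvec γ lam (i:ℕ) k := by
          intro k hk
          rw [Finset.mem_Icc] at hk
          rw [if_neg (show ¬ (j:ℕ) = k by omega), if_pos hj]
          ring
        have hR2 : ∀ k ∈ Icc 1 r,
            (if k = (i:ℕ) then γ (i:ℕ)
               else if k < (i:ℕ) then (1 - γ (i:ℕ)) * pihat γ lam ((i:ℕ) - 1) k else 0)
                * nuvec γ lam k (j:ℕ) = 0 := by
          intro k hk
          rw [hj, nuvec_zero, mul_zero]
        rw [Finset.sum_congr rfl hL2, Finset.sum_eq_zero hR2, add_zero, if_pos hj, mul_one,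
          sum_restrict (show (i:ℕ) ≤ r by omega)
            (fun kv => (1 - γ kv) * nuvec γ lam (i:ℕ) kv)
            (fun k hk => by beta_reduce; rw [nuvec_gt (show (i:ℕ) < k by omega), mul_zero]),
          hm, AId hlam0 hinter hlamr hmr, Nat.add_sub_cancel, pihat_zero]
      · have hL3 : ∀ k ∈ Icc 1 r,
            nuvec γ lam (i:ℕ) k *
                (if (j:ℕ) = k then γ k else if (j:ℕ) = 0 then 1 - γ k else 0)
              = (if (j:ℕ) = k then nuvec γ lam (i:ℕ) k * γ k else 0) := by
          intro k hk
          by_cases hkj : (j:ℕ) = k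
          · rw [if_pos hkj, if_pos hkj]
          · rw [if_neg hkj, if_neg hkj, if_neg hj, mul_zero]
        rw [Finset.sum_congr rfl hL3, Finset.sum_ite_eq,
          if_pos (Finset.mem_Icc.mpr ⟨by omega, by omega⟩),
          if_neg hj, mul_zero, zero_add,
          sum_restrict (show (i:ℕ) ≤ r by omega)
            (fun kv => (if kv = (i:ℕ) then γ (i:ℕ)
               else if kv < (i:ℕ) then (1 - γ (i:ℕ)) * pihat γ lam ((i:ℕ) - 1) kv else 0)
                * nuvec γ lam kv (j:ℕ))
            (fun k hk => by
              beta_reduce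
              rw [if_neg (show ¬ k = (i:ℕ) by omega),
                if_neg (show ¬ k < (i:ℕ) by omega), zero_mul]),
          hm, Nat.add_sub_cancel, Finset.sum_Icc_succ_top (show 1 ≤ m + 1 by omega),
          if_pos rfl]
        have hR3 : ∀ k ∈ Icc 1 m,
            (if k = m + 1 then γ (m+1)
               else if k < m + 1 then (1 - γ (m+1)) * pihat γ lam m k else 0)
                * nuvec γ lam k (j:ℕ)
              = (1 - γ (m+1)) * (pihat γ lam m k * nuvec γ lam k (j:ℕ)) := by
          intro k hk
          rw [Finset.mem_Icc] at hk
          rw [if_neg (show ¬ k = m + 1 by omega), if_pos (show k < m + 1 by omega), mul_assoc]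
        rw [Finset.sum_congr rfl hR3, ← Finset.mul_sum]
        rcases Nat.lt_trichotomy (j:ℕ) (m+1) with hjm | hjm | hjm
        · rw [sum_restrict_bot (show 1 ≤ (j:ℕ) by omega)
              (fun kv => pihat γ lam m kv * nuvec γ lam kv (j:ℕ))
              (fun k hk => by beta_reduce; rw [nuvec_gt hk, mul_zero]),
            piId hlam0 hinter hlamr (show 1 ≤ (j:ℕ) by omega) m (by omega) (by omega)]
          linear_combination nu_off hlam0 hinter hlamr (show 1 ≤ (j:ℕ) by omega)
            (show (j:ℕ) ≤ m by omega) hmr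
        · rw [Finset.sum_eq_zero (fun k hk => by
              rw [Finset.mem_Icc] at hk
              rw [nuvec_gt (show k < (j:ℕ) by omega), mul_zero]), hjm]
          ring
        · rw [Finset.sum_eq_zero (fun k hk => by
              rw [Finset.mem_Icc] at hk
              rw [nuvec_gt (show k < (j:ℕ) by omega), mul_zero]),
            nuvec_gt (show m + 1 < (j:ℕ) by omega)]
          ring
  · -- pi identity
    funext j
    have hjLt : (j:ℕ) < r + 1 := j.isLt
    show pistar γ lam r (j:ℕ) = _
    rw [Matrix.vecMul, dotProduct]
    have e : ∀ k : Fin (r+1),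
        pihat γ lam r (k:ℕ) * Lambda2 r γ lam k j
          = (fun kv => pihat γ lam r kv *
              (if kv = 0 then (if (j:ℕ) = 0 then (1:ℝ) else 0) else nuvec γ lam kv (j:ℕ))) k.val := by
      intro k; rw [Lambda2]; simp only [Matrix.of_apply]
    rw [Finset.sum_congr rfl (fun k _ => e k),
      sum_fin r (fun kv => pihat γ lam r kv *
        (if kv = 0 then (if (j:ℕ) = 0 then (1:ℝ) else 0) else nuvec γ lam kv (j:ℕ)))]
    beta_reduce
    by_cases hj : (j:ℕ) = 0
    · rw [if_pos rfl, if_pos hj, mul_one,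
        Finset.sum_eq_zero (fun k hk => by
          rw [Finset.mem_Icc] at hk
          rw [if_neg (by omega : ¬ k = 0), hj, nuvec_zero, mul_zero]),
        add_zero, hj, pistar_zero, pihat_zero]
    · have hres := sum_restrict_bot (r := r) (show 1 ≤ (j:ℕ) by omega)
        (fun kv => pihat γ lam r kv *
          (if kv = 0 then (0:ℝ) else nuvec γ lam kv (j:ℕ)))
        (fun k hk => by
          beta_reduce
          by_cases h0 : k = 0
          · rw [if_pos h0, mul_zero]
          · rw [if_neg h0, nuvec_gt (show k < (j:ℕ) by omega), mul_zero])
      rw [if_pos rfl, if_neg hj, mul_zero, zero_add, hres]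
      have hfin := piId hlam0 hinter hlamr (show 1 ≤ (j:ℕ) by omega) r
        (show (j:ℕ) ≤ r by omega) le_rfl
      rw [← hfin]
      apply Finset.sum_congr rfl
      intro k hk
      rw [Finset.mem_Icc] at hk
      beta_reduce
      rw [if_neg (show ¬ k = 0 by omega)]
  · -- delta column
    intro i
    rw [Lambda2]
    simp only [Matrix.of_apply, Fin.val_zero]
    by_cases hi : (i:ℕ) = 0
    · have hi0 : i = 0 := by simpa using hi
      subst hi0
      simp
    · rw [if_neg hi, nuvec_zero, if_neg (by simpa using hi)]
end

section
/- (Brown's representation, discrete time, without reversibility.) Let P be an irreducible aperiodic stochastic matrix on {0,1,…,n} with stationary distribution π, and assume P^t(0,0) is nonincreasing in t. Let N, V₁, V₂, … be independent random variables with P(N = k) = π(0)(1−π(0))^k for k ∈ ℕ, and with the V_i i.i.d. ℕ-valued satisfying P(V_i > t) = (P^t(0,0) − π(0))/(1 − π(0)) for every t ∈ ℕ. Then the hitting time of state 0 for the chain P started in π has the same distribution as Σ_{i=1}^N V_i; equivalently, for every integer t ≥ 0, (π P_abs^t)(0) = P(Σ_{i=1}^N V_i ≤ t). -/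
open Matrix MeasureTheory ProbabilityTheory

set_option linter.unusedSectionVars false
set_option linter.unusedVariables false
set_option maxHeartbeats 1000000

open Matrix MeasureTheory ProbabilityTheory Finset

/-! ### Auxiliary algebra -/

lemma geom_aux (q : ℝ) (m : ℕ) : (1 - q) * ∑ k ∈ range (m+1), q ^ k = 1 - q ^ (m+1) := by
  have := geom_sum_mul q (m+1)
  nlinarith [this]

lemma tele_aux (q : ℝ) (t : ℕ → ℝ) (m : ℕ) :
    ∑ k ∈ range (m+1), q ^ (k+1) * (t (k+1) - t k)
      = q ^ (m+1) * t (m+1) - q * t 0 + (1 - q) * ∑ k ∈ range m, q ^ (k+1) * t (k+1) := by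
  induction m with
  | zero => simp; ring
  | succ m ih =>
    rw [Finset.sum_range_succ, ih, Finset.sum_range_succ _ m]
    ring

lemma PRalg (p q : ℝ) (a g es : ℕ → ℝ) (tk wk : ℕ → ℕ → ℝ)
    (hq : q = 1 - p)
    (hag : ∀ t, a t = p + q * g t)
    (hes : ∀ m s, s ∈ range (m+1) → es s = ∑ k ∈ range (m+1), wk k s * (p * q^k))
    (hL6 : ∀ k m, ∑ s ∈ range (m+1), wk k s = 1 - tk k m)
    (hL5 : ∀ k m, ∑ s ∈ range (m+1), wk k s * g (m-s) = tk (k+1) m - tk k m)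
    (ht0 : ∀ m, tk 0 m = 0)
    (htm : ∀ m, tk (m+1) m = 1) :
    ∀ m, ∑ s ∈ range (m+1), es s * a (m-s) = p := by
  intro m
  have key : ∀ s ∈ range (m+1), es s * a (m-s)
      = ∑ k ∈ range (m+1), (p * q^k * p * wk k s + p * q^(k+1) * (wk k s * g (m-s))) := by
    intro s hs
    rw [hes m s hs, hag (m-s), Finset.sum_mul]
    exact Finset.sum_congr rfl fun k _ => by ring
  rw [Finset.sum_congr rfl key, Finset.sum_comm]
  have inner : ∀ k ∈ range (m+1),
      ∑ s ∈ range (m+1), (p * q^k * p * wk k s + p * q^(k+1) * (wk k s * g (m-s)))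
        = p * q^k * p * (1 - tk k m) + p * q^(k+1) * (tk (k+1) m - tk k m) := by
    intro k _
    rw [Finset.sum_add_distrib, ← Finset.mul_sum, ← Finset.mul_sum, hL6 k m, hL5 k m]
  rw [Finset.sum_congr rfl inner, Finset.sum_add_distrib]
  have e1 : ∑ k ∈ range (m+1), p * q^k * p * (1 - tk k m)
      = p * p * (∑ k ∈ range (m+1), q^k) - p * p * ∑ k ∈ range (m+1), q^k * tk k m := by
    rw [Finset.mul_sum, Finset.mul_sum, ← Finset.sum_sub_distrib]
    exact Finset.sum_congr rfl fun k _ => by ring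
  have e2 : ∑ k ∈ range (m+1), p * q^(k+1) * (tk (k+1) m - tk k m)
      = p * ∑ k ∈ range (m+1), q^(k+1) * (tk (k+1) m - tk k m) := by
    rw [Finset.mul_sum]
    exact Finset.sum_congr rfl fun k _ => by ring
  have hshift : ∑ k ∈ range (m+1), q^k * tk k m
      = ∑ k ∈ range m, q^(k+1) * tk (k+1) m := by
    rw [Finset.sum_range_succ' (fun k => q^k * tk k m) m]
    simp [ht0 m]
  have htele := tele_aux q (fun k => tk k m) m
  rw [e1, e2, htele, hshift, htm m, ht0 m]
  have hgeom := geom_aux q m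
  have h1q : 1 - q = p := by rw [hq]; ring
  rw [h1q] at hgeom
  set G := ∑ k ∈ range (m+1), q^k
  set A := ∑ k ∈ range m, q^(k+1) * tk (k+1) m
  linear_combination p * hgeom - p * A * hq

/-! ### Matrix side -/

variable {n : ℕ}

def Qm (P : Matrix (Fin (n + 1)) (Fin (n + 1)) ℝ) : Matrix (Fin (n + 1)) (Fin (n + 1)) ℝ :=
  Matrix.updateRow P 0 (fun l => if l = 0 then 1 else 0)

def uu (P : Matrix (Fin (n + 1)) (Fin (n + 1)) ℝ) (π : Fin (n + 1) → ℝ) (t : ℕ) : ℝ :=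
  (π ᵥ* Qm P ^ t) 0

def dd (P : Matrix (Fin (n + 1)) (Fin (n + 1)) ℝ) (π : Fin (n + 1) → ℝ) : ℕ → ℝ
  | 0 => uu P π 0
  | (s+1) => uu P π (s+1) - uu P π s

lemma dd_sum (P : Matrix (Fin (n + 1)) (Fin (n + 1)) ℝ) (π : Fin (n + 1) → ℝ) (t : ℕ) :
    ∑ s ∈ range (t+1), dd P π s = uu P π t := by
  induction t with
  | zero => simp [dd]
  | succ t ih => rw [Finset.sum_range_succ, ih, dd]; ring

lemma alpha_succ (P : Matrix (Fin (n + 1)) (Fin (n + 1)) ℝ) (π : Fin (n + 1) → ℝ) (m : ℕ)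
    (j : Fin (n + 1)) :
    (π ᵥ* Qm P ^ (m+1)) j
      = (π ᵥ* Qm P ^ m) 0 * (if j = 0 then 1 else 0)
        + ∑ i ∈ Finset.univ.erase 0, (π ᵥ* Qm P ^ m) i * P i j := by
  have hexp : (π ᵥ* Qm P ^ (m+1)) j = ∑ i, (π ᵥ* Qm P ^ m) i * Qm P i j := by
    rw [pow_succ, ← Matrix.vecMul_vecMul]
    simp [Matrix.vecMul, dotProduct]
  rw [hexp, ← Finset.add_sum_erase Finset.univ
    (fun i => (π ᵥ* Qm P ^ m) i * Qm P i j) (Finset.mem_univ (0 : Fin (n+1)))]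
  have h0 : Qm P 0 j = if j = 0 then 1 else 0 := by simp [Qm]
  have hi : ∀ i ∈ Finset.univ.erase (0 : Fin (n+1)),
      (π ᵥ* Qm P ^ m) i * Qm P i j = (π ᵥ* Qm P ^ m) i * P i j := fun i hi => by
    rw [Qm, Matrix.updateRow_ne (Finset.ne_of_mem_erase hi)]
  rw [h0, Finset.sum_congr rfl hi]

lemma keyA (P : Matrix (Fin (n + 1)) (Fin (n + 1)) ℝ) (π : Fin (n + 1) → ℝ) :
    ∀ (m : ℕ) (j : Fin (n + 1)), (π ᵥ* P ^ m) j
      = (if j = 0 then (0:ℝ) else (π ᵥ* Qm P ^ m) j)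
        + ∑ s ∈ range (m+1), dd P π s * (P ^ (m - s)) 0 j := by
  intro m
  induction m with
  | zero =>
    intro j
    have h0 : dd P π 0 = π 0 := by simp [dd, uu, Qm]
    simp only [pow_zero, Matrix.vecMul_one, zero_add, range_one, Finset.sum_singleton,
      Nat.zero_sub, h0]
    by_cases hj : j = 0
    · subst hj; simp [Matrix.one_apply]
    · simp [Matrix.one_apply, hj, Ne.symm hj]
  | succ m ih =>
    intro j
    have hexp : (π ᵥ* P ^ (m+1)) j = ∑ i, (π ᵥ* P ^ m) i * P i j := by
      rw [pow_succ, ← Matrix.vecMul_vecMul]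
      simp [Matrix.vecMul, dotProduct]
    have hsplit : ∑ i, (π ᵥ* P ^ m) i * P i j
        = (∑ i, (if i = 0 then (0:ℝ) else (π ᵥ* Qm P ^ m) i) * P i j)
          + ∑ s ∈ range (m+1), dd P π s * ((P ^ (m - s)) * P) 0 j := by
      have h1 : ∀ i, (π ᵥ* P ^ m) i * P i j
          = (if i = 0 then (0:ℝ) else (π ᵥ* Qm P ^ m) i) * P i j
            + ∑ s ∈ range (m+1), dd P π s * ((P ^ (m - s)) 0 i * P i j) := by
        intro i
        rw [ih i, add_mul, Finset.sum_mul]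
        congr 1
        exact Finset.sum_congr rfl fun s _ => by ring
      rw [Finset.sum_congr rfl fun i _ => h1 i, Finset.sum_add_distrib]
      congr 1
      rw [Finset.sum_comm]
      exact Finset.sum_congr rfl fun s _ => by
        rw [← Finset.mul_sum, Matrix.mul_apply]
    have hbeta : ∑ i, (if i = 0 then (0:ℝ) else (π ᵥ* Qm P ^ m) i) * P i j
        = (π ᵥ* Qm P ^ (m+1)) j - (π ᵥ* Qm P ^ m) 0 * (if j = 0 then 1 else 0) := by
      rw [alpha_succ P π m j]
      rw [← Finset.add_sum_erase Finset.univ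
        (fun i => (if i = 0 then (0:ℝ) else (π ᵥ* Qm P ^ m) i) * P i j)
        (Finset.mem_univ (0 : Fin (n+1)))]
      rw [Finset.sum_congr rfl (fun i hi => by
        rw [if_neg (Finset.ne_of_mem_erase hi)] :
          ∀ i ∈ Finset.univ.erase (0 : Fin (n+1)),
            (if i = 0 then (0:ℝ) else (π ᵥ* Qm P ^ m) i) * P i j
              = (π ᵥ* Qm P ^ m) i * P i j)]
      rw [if_pos rfl]
      ring
    have hpow : ∀ s ∈ range (m+1), dd P π s * ((P ^ (m - s)) * P) 0 j
        = dd P π s * (P ^ (m + 1 - s)) 0 j := by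
      intro s hs
      have h : m - s + 1 = m + 1 - s := by
        have := Finset.mem_range.mp hs; omega
      rw [← pow_succ, h]
    have hdd : dd P π (m+1) = (π ᵥ* Qm P ^ (m+1)) 0 - (π ᵥ* Qm P ^ m) 0 := by
      simp [dd, uu]
    rw [hexp, hsplit, hbeta, Finset.sum_congr rfl hpow,
      Finset.sum_range_succ (fun s => dd P π s * (P ^ (m + 1 - s)) 0 j) (m+1),
      Nat.sub_self, pow_zero, hdd]
    by_cases hj : j = 0
    · subst hj
      rw [if_pos rfl, if_pos rfl, Matrix.one_apply_eq]
      ring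
    · rw [if_neg hj, if_neg hj, Matrix.one_apply_ne (fun h => hj h.symm)]
      ring

lemma stat_pow (P : Matrix (Fin (n + 1)) (Fin (n + 1)) ℝ) (π : Fin (n + 1) → ℝ)
    (hπ_stat : π ᵥ* P = π) (m : ℕ) : π ᵥ* P ^ m = π := by
  induction m with
  | zero => simp
  | succ m ih => rw [pow_succ, ← Matrix.vecMul_vecMul, ih, hπ_stat]

lemma pi_pos (P : Matrix (Fin (n + 1)) (Fin (n + 1)) ℝ)
    (hprim : ∃ t : ℕ, ∀ i j, 0 < (P ^ t) i j)
    (π : Fin (n + 1) → ℝ) (hπ_nonneg : ∀ i, 0 ≤ π i) (hπ_sum : ∑ i, π i = 1)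
    (hπ_stat : π ᵥ* P = π) : ∀ j, 0 < π j := by
  obtain ⟨t, ht⟩ := hprim
  have hex : ∃ i, 0 < π i := by
    by_contra h
    push_neg at h
    have : ∀ i, π i = 0 := fun i => le_antisymm (h i) (hπ_nonneg i)
    simp [this] at hπ_sum
  obtain ⟨i₀, hi₀⟩ := hex
  intro j
  have hj : (π ᵥ* P ^ t) j = ∑ i, π i * (P ^ t) i j := by
    simp [Matrix.vecMul, dotProduct]
  have h1 : π i₀ * (P ^ t) i₀ j ≤ ∑ i, π i * (P ^ t) i j :=
    Finset.single_le_sum (f := fun i => π i * (P ^ t) i j)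
      (fun i _ => mul_nonneg (hπ_nonneg i) (le_of_lt (ht i j))) (Finset.mem_univ i₀)
  have h2 : 0 < π i₀ * (P ^ t) i₀ j := mul_pos hi₀ (ht i₀ j)
  have := stat_pow P π hπ_stat t
  rw [this] at hj
  linarith [hj ▸ h1]

lemma pi0_lt_one (hn : 1 ≤ n) (P : Matrix (Fin (n + 1)) (Fin (n + 1)) ℝ)
    (hprim : ∃ t : ℕ, ∀ i j, 0 < (P ^ t) i j)
    (π : Fin (n + 1) → ℝ) (hπ_nonneg : ∀ i, 0 ≤ π i) (hπ_sum : ∑ i, π i = 1)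
    (hπ_stat : π ᵥ* P = π) : π 0 < 1 := by
  have hpos := pi_pos P hprim π hπ_nonneg hπ_sum hπ_stat
  have h01 : (0 : Fin (n+1)) ≠ 1 := by
    intro h
    have := congrArg Fin.val h
    simp [Fin.val_one, Nat.mod_eq_of_lt (by omega : 1 < n + 1)] at this
  have hsub : ({0, 1} : Finset (Fin (n+1))) ⊆ Finset.univ := Finset.subset_univ _
  have hle : ∑ i ∈ ({0, 1} : Finset (Fin (n+1))), π i ≤ ∑ i, π i :=
    Finset.sum_le_sum_of_subset_of_nonneg hsub (fun i _ _ => hπ_nonneg i)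
  rw [Finset.sum_pair h01, hπ_sum] at hle
  have := hpos 1
  linarith

/-! ### Probability side -/

lemma msNat (s : Set ℕ) : MeasurableSet s := trivial

section Prob
variable {Ω : Type*} [MeasureSpace Ω] [IsProbabilityMeasure (ℙ : Measure Ω)]
  (N : Ω → ℕ) (V : ℕ → Ω → ℕ)

def Wk (V : ℕ → Ω → ℕ) (k : ℕ) : Ω → ℕ := fun ω => ∑ i ∈ Finset.range k, V i ω

lemma measurable_Wk (hV : ∀ i, Measurable (V i)) (k : ℕ) : Measurable (Wk V k) :=
  Finset.measurable_sum _ (fun i _ => hV i)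

lemma W_eq_sumX (k : ℕ) :
    Wk V k = ∑ j ∈ (Finset.range k).image (· + 1),
      (fun i : ℕ => if i = 0 then N else V (i-1)) j := by
  funext ω
  rw [Finset.sum_apply]
  rw [Finset.sum_image (by intro a _ b _ h; simp only at h; omega)]
  simp [Wk]

lemma indep_WN (hN : Measurable N) (hV : ∀ i, Measurable (V i))
    (hindep : iIndepFun
      (fun i : ℕ => if i = 0 then N else V (i - 1)) ℙ) (k : ℕ) :
    IndepFun (Wk V k) N ℙ := by
  have h := hindep.indepFun_finsetSum_of_notMem
    (by
      intro i
      cases i with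
      | zero => simpa using hN
      | succ i => simpa using hV i)
    (s := (Finset.range k).image (· + 1)) (i := 0) (by simp)
  simp only [if_pos rfl] at h
  rwa [W_eq_sumX N V k]

lemma indep_WV (hN : Measurable N) (hV : ∀ i, Measurable (V i))
    (hindep : iIndepFun
      (fun i : ℕ => if i = 0 then N else V (i - 1)) ℙ) (k : ℕ) :
    IndepFun (Wk V k) (V k) ℙ := by
  have h := hindep.indepFun_finsetSum_of_notMem
    (by
      intro i
      cases i with
      | zero => simpa using hN
      | succ i => simpa using hV i)
    (s := (Finset.range k).image (· + 1)) (i := k + 1) (by simp)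
  simp only [Nat.succ_ne_zero, if_false, Nat.add_sub_cancel] at h
  rwa [W_eq_sumX N V k]

lemma hE_null (hV0 : ∀ i, ℙ {ω | V i ω = 0} = 0) :
    ℙ (⋃ i : ℕ, {ω | V i ω = 0}) = 0 :=
  measure_iUnion_null hV0

lemma W_ge (k : ℕ) (ω : Ω) (hω : ω ∉ ⋃ i : ℕ, {ω | V i ω = 0}) : k ≤ Wk V k ω := by
  simp only [Set.mem_iUnion, Set.mem_setOf_eq, not_exists] at hω
  calc k = ∑ i ∈ Finset.range k, 1 := by simp
  _ ≤ Wk V k ω := Finset.sum_le_sum (fun i _ => Nat.one_le_iff_ne_zero.mpr (hω i))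

lemma L3 (hV0 : ∀ i, ℙ {ω | V i ω = 0} = 0) {k s : ℕ} (h : s < k) :
    ℙ {ω | Wk V k ω = s} = 0 := by
  refine measure_mono_null ?_ (hE_null V hV0)
  intro ω hω
  by_contra hc
  have := W_ge V k ω hc
  simp only [Set.mem_setOf_eq] at hω
  omega

lemma L4a (hV : ∀ i, Measurable (V i)) (hV0 : ∀ i, ℙ {ω | V i ω = 0} = 0) (m : ℕ) :
    ℙ {ω | m < Wk V (m+1) ω} = 1 := by
  have hms : MeasurableSet {ω | m < Wk V (m+1) ω} :=
    measurable_Wk V hV (m+1) (msNat {x | m < x})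
  rw [← prob_compl_eq_zero_iff hms]
  refine measure_mono_null ?_ (hE_null V hV0)
  intro ω hω
  by_contra hc
  have := W_ge V (m+1) ω hc
  simp only [Set.mem_compl_iff, Set.mem_setOf_eq, not_lt] at hω
  omega

lemma L4b (m : ℕ) : ℙ {ω | m < Wk V 0 ω} = 0 := by
  have : {ω : Ω | m < Wk V 0 ω} = ∅ := by
    ext ω; simp [Wk]
  simp [this]

lemma L6 (hV : ∀ i, Measurable (V i)) (k m : ℕ) :
    ∑ s ∈ Finset.range (m+1), (ℙ {ω | Wk V k ω = s}).toReal
      = 1 - (ℙ {ω | m < Wk V k ω}).toReal := by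
  have hms : ∀ s : ℕ, MeasurableSet {ω | Wk V k ω = s} := fun s =>
    measurable_Wk V hV k (msNat {x | x = s})
  have hcup : {ω | Wk V k ω ≤ m} = ⋃ s ∈ Finset.range (m+1), {ω | Wk V k ω = s} := by
    ext ω
    simp only [Set.mem_setOf_eq, Set.mem_iUnion, Finset.mem_range]
    constructor
    · intro h; exact ⟨Wk V k ω, by omega, rfl⟩
    · rintro ⟨s, hs, h⟩; omega
  have hdisj : (↑(Finset.range (m+1)) : Set ℕ).PairwiseDisjoint
      (fun s => {ω | Wk V k ω = s}) := by
    intro a _ b _ hab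
    simp only [Function.onFun, Set.disjoint_left]
    intro ω h1 h2
    simp only [Set.mem_setOf_eq] at h1 h2
    omega
  have hadd := measure_biUnion_finset (μ := ℙ) hdisj (fun s _ => hms s)
  rw [← hcup] at hadd
  have hcompl : {ω | Wk V k ω ≤ m}ᶜ = {ω | m < Wk V k ω} := by
    ext ω; simp only [Set.mem_compl_iff, Set.mem_setOf_eq, not_le]
  have hms2 : MeasurableSet {ω | Wk V k ω ≤ m} :=
    measurable_Wk V hV k (msNat {x | x ≤ m})
  have h1 := prob_compl_eq_one_sub (μ := ℙ) hms2
  rw [hcompl] at h1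
  have h2 : (ℙ {ω | m < Wk V k ω}).toReal = 1 - (ℙ {ω | Wk V k ω ≤ m}).toReal := by
    rw [h1, ENNReal.toReal_sub_of_le prob_le_one ENNReal.one_ne_top]
    simp
  rw [h2, hadd, ENNReal.toReal_sum (fun s _ => measure_ne_top _ _)]
  ring

lemma L5 (hN : Measurable N) (hV : ∀ i, Measurable (V i))
    (hWV : ∀ k, IndepFun (Wk V k) (V k) ℙ)
    (k m : ℕ) :
    (ℙ {ω | m < Wk V (k+1) ω}).toReal
      = (ℙ {ω | m < Wk V k ω}).toReal
        + ∑ s ∈ Finset.range (m+1),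
            (ℙ {ω | Wk V k ω = s}).toReal * (ℙ {ω | m - s < V k ω}).toReal := by
  have hWsucc : ∀ ω, Wk V (k+1) ω = Wk V k ω + V k ω := fun ω =>
    Finset.sum_range_succ _ k
  have hsplit : {ω | m < Wk V (k+1) ω}
      = {ω | m < Wk V k ω}
        ∪ ⋃ s ∈ Finset.range (m+1), ({ω | Wk V k ω = s} ∩ {ω | m - s < V k ω}) := by
    ext ω
    simp only [Set.mem_setOf_eq, Set.mem_union, Set.mem_iUnion, Set.mem_inter_iff,
      Finset.mem_range, hWsucc ω]
    constructor
    · intro h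
      by_cases h2 : m < Wk V k ω
      · exact Or.inl h2
      · exact Or.inr ⟨Wk V k ω, by omega, rfl, by omega⟩
    · rintro (h | ⟨s, hs, h1, h2⟩) <;> omega
  have hmsW : ∀ s : ℕ, MeasurableSet ({ω | Wk V k ω = s} ∩ {ω | m - s < V k ω}) :=
    fun s => (measurable_Wk V hV k (msNat {x | x = s})).inter
      (hV k (msNat {x | m - s < x}))
  have hdisj2 : (↑(Finset.range (m+1)) : Set ℕ).PairwiseDisjoint
      (fun s => {ω | Wk V k ω = s} ∩ {ω | m - s < V k ω}) := by
    intro a _ b _ hab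
    simp only [Function.onFun, Set.disjoint_left]
    intro ω h1 h2
    exact hab (h1.1.symm.trans h2.1)
  have hdisjU : Disjoint {ω | m < Wk V k ω}
      (⋃ s ∈ Finset.range (m+1), ({ω | Wk V k ω = s} ∩ {ω | m - s < V k ω})) := by
    rw [Set.disjoint_left]
    intro ω h1 h2
    simp only [Set.mem_iUnion, Set.mem_inter_iff, Set.mem_setOf_eq, Finset.mem_range] at h1 h2
    obtain ⟨s, hs, h3, _⟩ := h2
    omega
  have hmsU : MeasurableSet (⋃ s ∈ Finset.range (m+1),
      ({ω | Wk V k ω = s} ∩ {ω | m - s < V k ω})) :=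
    MeasurableSet.biUnion (Finset.countable_toSet _) (fun s _ => hmsW s)
  have hmeas : ℙ {ω | m < Wk V (k+1) ω}
      = ℙ {ω | m < Wk V k ω}
        + ∑ s ∈ Finset.range (m+1), ℙ ({ω | Wk V k ω = s} ∩ {ω | m - s < V k ω}) := by
    rw [hsplit, measure_union hdisjU hmsU, measure_biUnion_finset (μ := ℙ) hdisj2
      (fun s _ => hmsW s)]
  have hindep2 : ∀ s, ℙ ({ω | Wk V k ω = s} ∩ {ω | m - s < V k ω})
      = ℙ {ω | Wk V k ω = s} * ℙ {ω | m - s < V k ω} :=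
    fun s => (hWV k).measure_inter_preimage_eq_mul {x | x = s} {x | m - s < x}
      (msNat _) (msNat _)
  rw [hmeas, ENNReal.toReal_add (measure_ne_top _ _)
    (ENNReal.sum_ne_top.mpr (fun s _ => measure_ne_top _ _))]
  congr 1
  rw [ENNReal.toReal_sum (fun s _ => by
    rw [hindep2 s]; exact ENNReal.mul_ne_top (measure_ne_top _ _) (measure_ne_top _ _))]
  exact Finset.sum_congr rfl (fun s _ => by rw [hindep2 s, ENNReal.toReal_mul])

lemma L1 (hN : Measurable N) (hV : ∀ i, Measurable (V i))
    (hV0 : ∀ i, ℙ {ω | V i ω = 0} = 0)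
    (hWN : ∀ k, IndepFun (Wk V k) N ℙ) (s : ℕ) :
    ℙ {ω | ∑ i ∈ Finset.range (N ω), V i ω = s}
      = ∑ k ∈ Finset.range (s+1), ℙ {ω | Wk V k ω = s} * ℙ {ω | N ω = k} := by
  set C : ℕ → Set Ω := fun k => {ω | Wk V k ω = s} ∩ {ω | N ω = k} with hC
  have hmsC : ∀ k, MeasurableSet (C k) := fun k =>
    (measurable_Wk V hV k (msNat {x | x = s})).inter (hN (msNat {x | x = k}))
  have hCsub : ∀ k, C k ⊆ {ω | ∑ i ∈ Finset.range (N ω), V i ω = s} := by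
    intro k ω hω
    obtain ⟨h1, h2⟩ := hω
    simp only [Set.mem_setOf_eq] at h1 h2 ⊢
    rw [h2]; exact h1
  have hdisj : (↑(Finset.range (s+1)) : Set ℕ).PairwiseDisjoint C := by
    intro a _ b _ hab
    simp only [Function.onFun, Set.disjoint_left, hC]
    intro ω h1 h2
    exact hab (h1.2.symm.trans h2.2)
  have hsum := measure_biUnion_finset (μ := ℙ) hdisj (fun k _ => hmsC k)
  have hCval : ∀ k, ℙ (C k) = ℙ {ω | Wk V k ω = s} * ℙ {ω | N ω = k} := fun k =>
    (hWN k).measure_inter_preimage_eq_mul {x | x = s} {x | x = k} (msNat _) (msNat _)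
  rw [← Finset.sum_congr rfl (fun k _ => hCval k), ← hsum]
  apply le_antisymm
  · have hcover : {ω | ∑ i ∈ Finset.range (N ω), V i ω = s}
        ⊆ (⋃ k ∈ Finset.range (s+1), C k) ∪ ⋃ i : ℕ, {ω | V i ω = 0} := by
      intro ω hω
      by_cases hE : ω ∈ ⋃ i : ℕ, {ω | V i ω = 0}
      · exact Or.inr hE
      · left
        simp only [Set.mem_setOf_eq] at hω
        have hge := W_ge V (N ω) ω hE
        have hle : N ω ≤ s := by
          have : Wk V (N ω) ω = s := hω
          omega
        simp only [Set.mem_iUnion, Finset.mem_range]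
        exact ⟨N ω, by omega, hω, rfl⟩
    calc ℙ {ω | ∑ i ∈ Finset.range (N ω), V i ω = s}
        ≤ ℙ ((⋃ k ∈ Finset.range (s+1), C k) ∪ ⋃ i : ℕ, {ω | V i ω = 0}) :=
          measure_mono hcover
      _ ≤ ℙ (⋃ k ∈ Finset.range (s+1), C k) + ℙ (⋃ i : ℕ, {ω | V i ω = 0}) :=
          measure_union_le _ _
      _ = ℙ (⋃ k ∈ Finset.range (s+1), C k) := by rw [measure_iUnion_null hV0, add_zero]
  · exact measure_mono (Set.iUnion₂_subset (fun k _ => hCsub k))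

lemma measurable_Sset (hN : Measurable N) (hV : ∀ i, Measurable (V i)) (s : ℕ) :
    MeasurableSet {ω | ∑ i ∈ Finset.range (N ω), V i ω = s} := by
  have : {ω | ∑ i ∈ Finset.range (N ω), V i ω = s}
      = ⋃ k : ℕ, ({ω | Wk V k ω = s} ∩ {ω | N ω = k}) := by
    ext ω
    simp only [Set.mem_setOf_eq, Set.mem_iUnion, Set.mem_inter_iff]
    constructor
    · intro h; exact ⟨N ω, h, rfl⟩
    · rintro ⟨k, h1, h2⟩; rw [h2]; exact h1
  rw [this]
  exact MeasurableSet.iUnion (fun k =>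
    (measurable_Wk V hV k (msNat {x | x = s})).inter (hN (msNat {x | x = k})))

lemma L2 (hN : Measurable N) (hV : ∀ i, Measurable (V i)) (m : ℕ) :
    (ℙ {ω | ∑ i ∈ Finset.range (N ω), V i ω ≤ m}).toReal
      = ∑ s ∈ Finset.range (m+1), (ℙ {ω | ∑ i ∈ Finset.range (N ω), V i ω = s}).toReal := by
  have hcup : {ω | ∑ i ∈ Finset.range (N ω), V i ω ≤ m}
      = ⋃ s ∈ Finset.range (m+1), {ω | ∑ i ∈ Finset.range (N ω), V i ω = s} := by
    ext ω
    simp only [Set.mem_setOf_eq, Set.mem_iUnion, Finset.mem_range]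
    constructor
    · intro h; exact ⟨_, by omega, rfl⟩
    · rintro ⟨s, hs, h⟩; omega
  have hdisj : (↑(Finset.range (m+1)) : Set ℕ).PairwiseDisjoint
      (fun s => {ω | ∑ i ∈ Finset.range (N ω), V i ω = s}) := by
    intro a _ b _ hab
    simp only [Function.onFun, Set.disjoint_left]
    intro ω h1 h2
    simp only [Set.mem_setOf_eq] at h1 h2
    omega
  rw [hcup, measure_biUnion_finset (μ := ℙ) hdisj
    (fun s _ => measurable_Sset N V hN hV s),
    ENNReal.toReal_sum (fun s _ => measure_ne_top _ _)]

end Prob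

/-- Brown's representation, discrete time, without reversibility: for an
irreducible aperiodic stochastic matrix `P` with stationary distribution `π` such that
`P^t(0,0)` is nonincreasing in `t`, if `N, V₁, V₂, …` are independent, `N` is Geometric
with `P(N = k) = π(0)(1−π(0))^k`, and the `V_i` are i.i.d. with
`P(V_i > t) = (P^t(0,0) − π(0))/(1 − π(0))`, then the hitting time of state 0 from a
stationary start is distributed as `Σ_{i=1}^N V_i`. -/
theorem stmt18 {n : ℕ} (hn : 1 ≤ n)
    (P : Matrix (Fin (n + 1)) (Fin (n + 1)) ℝ)
    (hP_nonneg : ∀ i j, 0 ≤ P i j) (hP_row : ∀ i, ∑ j, P i j = 1)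
    (hprim : ∃ t : ℕ, ∀ i j, 0 < (P ^ t) i j)
    (π : Fin (n + 1) → ℝ) (hπ_nonneg : ∀ i, 0 ≤ π i) (hπ_sum : ∑ i, π i = 1)
    (hπ_stat : π ᵥ* P = π)
    (hmono : ∀ t : ℕ, (P ^ (t + 1)) 0 0 ≤ (P ^ t) 0 0)
    {Ω : Type*} [MeasureSpace Ω] [IsProbabilityMeasure (ℙ : Measure Ω)]
    (N : Ω → ℕ) (V : ℕ → Ω → ℕ)
    (hN_meas : Measurable N) (hV_meas : ∀ i, Measurable (V i))
    (hindep : iIndepFun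
      (fun i : ℕ => if i = 0 then N else V (i - 1)) ℙ)
    (hN_dist : ∀ k : ℕ, (ℙ {ω | N ω = k}).toReal = π 0 * (1 - π 0) ^ k)
    (hV_dist : ∀ (i : ℕ) (t : ℕ),
      (ℙ {ω | t < V i ω}).toReal = ((P ^ t) 0 0 - π 0) / (1 - π 0)) :
    ∀ t : ℕ,
      ((π ᵥ* Matrix.updateRow P 0 (fun l => if l = 0 then 1 else 0) ^ t) 0)
        = (ℙ {ω | ∑ i ∈ Finset.range (N ω), V i ω ≤ t}).toReal := by
  -- basic positivity facts
  have hlt : π 0 < 1 := pi0_lt_one hn P hprim π hπ_nonneg hπ_sum hπ_stat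
  have hqne : (1 - π 0) ≠ 0 := by linarith
  -- each V i is a.s. positive
  have hV0 : ∀ i, ℙ {ω | V i ω = 0} = 0 := by
    intro i
    have h := hV_dist i 0
    have ha0 : (P ^ 0) 0 0 = 1 := by rw [pow_zero, Matrix.one_apply_eq]
    rw [ha0] at h
    have h1 : (ℙ {ω | 0 < V i ω}).toReal = 1 := by
      rw [h]; field_simp
    have h2 : ℙ {ω | 0 < V i ω} = 1 := by
      have hne := measure_ne_top ℙ {ω | 0 < V i ω}
      rcases ENNReal.toReal_eq_one_iff (ℙ {ω | 0 < V i ω}) |>.mp h1 with h2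
      exact h2
    have hcompl : {ω | V i ω = 0} = {ω | 0 < V i ω}ᶜ := by
      ext ω; simp [Nat.pos_iff_ne_zero]
    have hms : MeasurableSet {ω | 0 < V i ω} := (hV_meas i) (msNat {x | 0 < x})
    rw [hcompl]
    exact (prob_compl_eq_zero_iff hms).mpr h2
  -- independence
  have hWN : ∀ k, IndepFun (Wk V k) N ℙ := indep_WN N V hN_meas hV_meas hindep
  have hWV : ∀ k, IndepFun (Wk V k) (V k) ℙ := indep_WV N V hN_meas hV_meas hindep
  -- abbreviations
  let es : ℕ → ℝ := fun s => (ℙ {ω | ∑ i ∈ Finset.range (N ω), V i ω = s}).toReal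
  let wkf : ℕ → ℕ → ℝ := fun k s => (ℙ {ω | Wk V k ω = s}).toReal
  let tkf : ℕ → ℕ → ℝ := fun k m => (ℙ {ω | m < Wk V k ω}).toReal
  let g : ℕ → ℝ := fun t => ((P ^ t) 0 0 - π 0) / (1 - π 0)
  -- probability-side renewal identity
  have PR : ∀ m, ∑ s ∈ Finset.range (m+1), es s * (P ^ (m - s)) 0 0 = π 0 := by
    refine PRalg (π 0) (1 - π 0) (fun t => (P ^ t) 0 0) g es tkf wkf rfl ?_ ?_ ?_ ?_ ?_ ?_
    · intro t
      show (P ^ t) 0 0 = π 0 + (1 - π 0) * (((P ^ t) 0 0 - π 0) / (1 - π 0))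
      field_simp
      ring
    · intro m s hs
      have hbase := L1 N V hN_meas hV_meas hV0 hWN s
      have hes1 : es s = ∑ k ∈ Finset.range (s+1), wkf k s * (π 0 * (1 - π 0)^k) := by
        show (ℙ {ω | ∑ i ∈ Finset.range (N ω), V i ω = s}).toReal = _
        rw [hbase, ENNReal.toReal_sum (fun k _ =>
          ENNReal.mul_ne_top (measure_ne_top _ _) (measure_ne_top _ _))]
        exact Finset.sum_congr rfl fun k _ => by
          rw [ENNReal.toReal_mul, hN_dist k]
      rw [hes1]
      apply Finset.sum_subset
      · exact Finset.range_subset_range.mpr (by simp at hs; omega)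
      · intro k hk1 hk2
        have hks : s < k := by
          simp only [Finset.mem_range] at hk1 hk2; omega
        have : wkf k s = 0 := by
          show (ℙ {ω | Wk V k ω = s}).toReal = 0
          rw [L3 V hV0 hks]; simp
        rw [this, zero_mul]
    · intro k m
      exact L6 V hV_meas k m
    · intro k m
      have h5 := L5 N V hN_meas hV_meas hWV k m
      have hsum : ∑ s ∈ Finset.range (m+1), wkf k s * g (m - s)
          = ∑ s ∈ Finset.range (m+1),
              (ℙ {ω | Wk V k ω = s}).toReal * (ℙ {ω | m - s < V k ω}).toReal := by
        exact Finset.sum_congr rfl fun s _ => by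
          rw [hV_dist k (m - s)]
      rw [hsum]
      show _ = (ℙ {ω | m < Wk V (k+1) ω}).toReal - (ℙ {ω | m < Wk V k ω}).toReal
      rw [h5]; ring
    · intro m
      show (ℙ {ω | m < Wk V 0 ω}).toReal = 0
      rw [L4b V m]; simp
    · intro m
      show (ℙ {ω | m < Wk V (m+1) ω}).toReal = 1
      rw [L4a V hV_meas hV0 m]; simp
  -- matrix-side renewal identity
  have MR : ∀ m, ∑ s ∈ Finset.range (m+1), dd P π s * (P ^ (m - s)) 0 0 = π 0 := by
    intro m
    have h := keyA P π m 0
    rw [stat_pow P π hπ_stat m, if_pos rfl, zero_add] at h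
    exact h.symm
  -- increments agree
  have hde : ∀ m, dd P π m = es m := by
    intro m
    induction m using Nat.strong_induction_on with
    | _ m ih =>
    have h1 := MR m
    have h2 := PR m
    rw [Finset.sum_range_succ] at h1 h2
    have ha1 : (P ^ (m - m)) 0 0 = 1 := by
      rw [Nat.sub_self, pow_zero, Matrix.one_apply_eq]
    rw [ha1, mul_one] at h1 h2
    have hsum : ∑ s ∈ Finset.range m, dd P π s * (P ^ (m - s)) 0 0
        = ∑ s ∈ Finset.range m, es s * (P ^ (m - s)) 0 0 :=
      Finset.sum_congr rfl fun s hs => by rw [ih s (Finset.mem_range.mp hs)]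
    linarith
  -- conclusion
  intro t
  show uu P π t = _
  rw [← dd_sum P π t, L2 N V hN_meas hV_meas t]
  exact Finset.sum_congr rfl fun s _ => hde s
end

section
/- Suppose in addition that P is a star chain with hub 0, i.e., P(i,j) = 0 whenever i ≠ j, i ≠ 0 and j ≠ 0; thus P₀ = diag(η₁,…,η_n) with η_j = P(j,j). Then for each i = 1,…,r, P*(0,i) = Σ_{j ∈ m(i)} P(0,j), where m(i) := { j ∈ {1,…,n} : P(j,j) = γ_i }. -/
open Matrix Polynomial

def hubEquiv (n : ℕ) : Fin 1 ⊕ Fin n ≃ Fin (n + 1) where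
  toFun := Sum.elim (fun _ => 0) Fin.succ
  invFun := fun i => Fin.cases (Sum.inl 0) Sum.inr i
  left_inv := by
    rintro (x | j)
    · simp [Subsingleton.elim x 0]
    · simp
  right_inv := by
    intro i
    induction i using Fin.cases <;> simp

lemma arrow_det {n : ℕ} (M : Matrix (Fin (n + 1)) (Fin (n + 1)) ℝ)
    (h0 : ∀ i j : Fin n, i ≠ j → M i.succ j.succ = 0)
    (hd : ∀ j : Fin n, M j.succ j.succ ≠ 0) :
    M.det = M 0 0 * ∏ j : Fin n, M j.succ j.succ
      - ∑ j : Fin n, M 0 j.succ * M j.succ 0 * ∏ k ∈ Finset.univ.erase j, M k.succ k.succ := by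
  classical
  set d : Fin n → ℝ := fun j => M j.succ j.succ with hdd
  have hsub : M.submatrix (hubEquiv n) (hubEquiv n) =
      Matrix.fromBlocks (Matrix.of fun _ _ : Fin 1 => M 0 0)
        (Matrix.of fun (_ : Fin 1) j => M 0 j.succ)
        (Matrix.of fun j (_ : Fin 1) => M j.succ 0)
        (Matrix.diagonal d) := by
    ext i j
    cases i with
    | inl i =>
      cases j with
      | inl j => rfl
      | inr j => rfl
    | inr i =>
      cases j with
      | inl j => rfl
      | inr j =>
        by_cases hij : i = j
        · subst hij
          simp [hubEquiv, Matrix.diagonal_apply_eq, hdd]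
        · simp [hubEquiv, Matrix.diagonal_apply_ne _ hij, h0 i j hij]
  set Dinv := Matrix.diagonal (fun j => (d j)⁻¹) with hDinv
  have hDD : Dinv * Matrix.diagonal d = 1 := by
    rw [hDinv, Matrix.diagonal_mul_diagonal]
    have : (fun j => (d j)⁻¹ * d j) = fun _ => (1:ℝ) := by
      funext j; exact inv_mul_cancel₀ (hd j)
    rw [this, Matrix.diagonal_one]
  haveI : Invertible (Matrix.diagonal d) := invertibleOfLeftInverse _ _ hDD
  have hinv : ⅟(Matrix.diagonal d) = Dinv := invOf_eq_left_inv hDD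
  have hdet : M.det = (Matrix.diagonal d).det *
      ((Matrix.of fun _ _ : Fin 1 => M 0 0) -
        (Matrix.of fun (_ : Fin 1) (j : Fin n) => M 0 j.succ) * Dinv *
        (Matrix.of fun (j : Fin n) (_ : Fin 1) => M j.succ 0)).det := by
    rw [← Matrix.det_submatrix_equiv_self (hubEquiv n) M, hsub,
      Matrix.det_fromBlocks₂₂, hinv]
  rw [hdet, Matrix.det_diagonal, Matrix.det_fin_one]
  have hentry : ((Matrix.of fun _ _ : Fin 1 => M 0 0) -
        (Matrix.of fun (_ : Fin 1) (j : Fin n) => M 0 j.succ) * Dinv *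
        (Matrix.of fun (j : Fin n) (_ : Fin 1) => M j.succ 0)) 0 0
      = M 0 0 - ∑ j : Fin n, M 0 j.succ * (d j)⁻¹ * M j.succ 0 := by
    simp [hDinv, Matrix.sub_apply, Matrix.mul_apply, Matrix.diagonal_apply, ite_mul, mul_ite]
  rw [hentry, mul_sub, Finset.mul_sum]
  congr 1
  · ring
  · apply Finset.sum_congr rfl
    intro j _
    rw [← Finset.mul_prod_erase Finset.univ d (Finset.mem_univ j)]
    linear_combination ((∏ x ∈ Finset.univ.erase j, d x) * M 0 j.succ * M j.succ 0) *
      mul_inv_cancel₀ (hd j)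

lemma eval_charpoly_det {N : ℕ} (Q : Matrix (Fin N) (Fin N) ℝ) (x : ℝ) :
    Q.charpoly.eval x = (Matrix.of fun i j => (if i = j then x else 0) - Q i j).det := by
  unfold Matrix.charpoly
  rw [← Polynomial.coe_evalRingHom, RingHom.map_det]
  congr 1
  ext i j
  by_cases h : i = j
  · subst h; simp [charmatrix_apply_eq]
  · simp [charmatrix_apply_ne _ _ _ h, h]

lemma pow_factor_cancel_aux {a : ℝ} :
    ∀ (s t : ℕ), s ≤ t → ∀ (u v : Polynomial ℝ), u.eval a ≠ 0 →
      (X - C a)^s * u = (X - C a)^t * v → s = t ∧ u = v := by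
    intro s t hst u v hu h
    obtain ⟨d, rfl⟩ := Nat.exists_eq_add_of_le hst
    rw [pow_add, mul_assoc] at h
    have hu' := mul_left_cancel₀ (pow_ne_zero s (X_sub_C_ne_zero a)) h
    have hev := congrArg (Polynomial.eval a) hu'
    rw [eval_mul, eval_pow, eval_sub, eval_X, eval_C, sub_self] at hev
    rcases Nat.eq_zero_or_pos d with hd | hd
    · subst hd; rw [pow_zero, one_mul] at hu'; exact ⟨rfl, hu'⟩
    · exfalso; rw [zero_pow (by omega), zero_mul] at hev; exact hu hev

lemma pow_factor_cancel {a : ℝ} {u v : Polynomial ℝ} (hu : u.eval a ≠ 0) (hv : v.eval a ≠ 0)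
    {s t : ℕ} (h : (X - C a)^s * u = (X - C a)^t * v) : s = t ∧ u = v := by
  rcases le_total s t with hst | hst
  · exact pow_factor_cancel_aux s t hst u v hu h
  · obtain ⟨he, hv'⟩ := pow_factor_cancel_aux t s hst v u hv h.symm
    exact ⟨he.symm, hv'.symm⟩

/-- if the given chain `P` is itself a star chain with hub `0` (so that
`P₀` is diagonal with entries `η_j = P(j,j)`), then for each `i = 1,…,r`,
`P*(0,i) = Σ_{j ∈ m(i)} P(0,j)` where `m(i) = {j ∈ {1,…,n} : P(j,j) = γ_i}`: the star
chain `P*` is obtained by collapsing all leaves with the same one-step transition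
probability to `0` into a single leaf. -/
theorem stmt19 {n : ℕ} (hn : 1 ≤ n)
    (P : Matrix (Fin (n + 1)) (Fin (n + 1)) ℝ)
    (hP_nonneg : ∀ i j, 0 ≤ P i j) (hP_row : ∀ i, ∑ j, P i j = 1)
    (hprim : ∃ t : ℕ, ∀ i j, 0 < (P ^ t) i j)
    (π : Fin (n + 1) → ℝ) (hπ_pos : ∀ i, 0 < π i) (hπ_sum : ∑ i, π i = 1)
    (hπ_stat : π ᵥ* P = π)
    (hstar : ∀ i j : Fin (n + 1), i ≠ j → i ≠ 0 → j ≠ 0 → P i j = 0)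
    (r : ℕ) (hr : 1 ≤ r) (γ lam : ℕ → ℝ)
    (hlam0 : lam 0 = 1)
    (hinter : ∀ i : ℕ, 1 ≤ i → i ≤ r → lam (i - 1) > γ i ∧ γ i > lam i)
    (hlamr : 0 ≤ lam r)
    (c : Polynomial ℝ) (hc : c.Monic)
    (hcharP : P.charpoly = c * ∏ i ∈ Finset.range (r + 1), (X - C (lam i)))
    (hcharP0 : (P.submatrix Fin.succ Fin.succ).charpoly
        = c * ∏ i ∈ Finset.Icc 1 r, (X - C (γ i))) :
    ∀ i : Fin (r + 1), i ≠ 0 →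
      Pstar r γ lam 0 i
        = ∑ j ∈ Finset.univ.filter (fun j : Fin (n + 1) => j ≠ 0 ∧ P j j = γ i.val),
            P 0 j := by
  classical
  intro i hi
  set η : Fin n → ℝ := fun j => P j.succ j.succ with hη
  -- ordering facts
  have hlamdec : ∀ l, l + 1 ≤ r → lam (l + 1) < lam l := by
    intro l hl
    have h := hinter (l + 1) (by omega) hl
    rw [Nat.add_sub_cancel] at h
    exact lt_trans h.2 h.1
  have hlammono : ∀ l m : ℕ, l ≤ m → m ≤ r → lam m ≤ lam l := by
    intro l m
    induction m with
    | zero =>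
      intro h1 _
      have : l = 0 := by omega
      subst this; exact le_rfl
    | succ k ih =>
      intro h1 h2
      rcases Nat.lt_or_ge l (k + 1) with h | h
      · exact le_trans (le_of_lt (hlamdec k h2)) (ih (by omega) (by omega))
      · have : l = k + 1 := by omega
        subst this; exact le_rfl
  have hgl : ∀ k l, 1 ≤ k → k ≤ l → l ≤ r → lam l < γ k := fun k l h1 h2 h3 =>
    lt_of_le_of_lt (hlammono k l h2 h3) (hinter k h1 (le_trans h2 h3)).2
  have hlg : ∀ l k, l < k → k ≤ r → γ k < lam l := fun l k h1 h2 =>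
    lt_of_lt_of_le (hinter k (by omega) h2).1 (hlammono l (k - 1) (by omega) (by omega))
  have hi1 : 1 ≤ i.val := by
    rcases Nat.eq_zero_or_pos i.val with h | h
    · exact absurd (Fin.ext h) hi
    · exact h
  have hivr : i.val ≤ r := by omega
  set gi := γ i.val with hgi
  have hgi1 : gi < 1 := by
    have := hlg 0 i.val (by omega) hivr
    rwa [hlam0] at this
  have hγne : ∀ k, 1 ≤ k → k ≤ r → k ≠ i.val → gi ≠ γ k := by
    intro k h1 h2 hk
    rcases Nat.lt_or_ge k i.val with h | h
    · have h3 := hlg k i.val h hivr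
      have h4 := hgl k k h1 le_rfl h2
      exact ne_of_lt (lt_trans h3 h4)
    · have hik : i.val < k := by omega
      have h3 := hlg i.val k hik h2
      have h4 := hgl i.val i.val hi1 le_rfl hivr
      exact ne_of_gt (lt_trans h3 h4)
  have hgilam : ∀ l, l ≤ r → gi ≠ lam l := by
    intro l hl
    rcases Nat.lt_or_ge l i.val with h | h
    · exact ne_of_lt (hlg l i.val h hivr)
    · exact ne_of_gt (hgl i.val l hi1 h hl)
  have hl1 : ∀ l, 1 ≤ l → l ≤ r → lam l < 1 := by
    intro l h1 h2
    calc lam l ≤ lam 1 := hlammono 1 l h1 h2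
    _ < lam 0 := hlamdec 0 hr
    _ = 1 := hlam0
  have hγ1 : ∀ k, 1 ≤ k → k ≤ r → γ k < 1 := by
    intro k h1 h2
    have := hlg 0 k h1 h2
    rwa [hlam0] at this
  -- charpoly of diagonal P₀
  have hcp0 : (P.submatrix Fin.succ Fin.succ).charpoly = ∏ j : Fin n, (X - C (η j)) := by
    unfold Matrix.charpoly
    have hdiag : charmatrix (P.submatrix Fin.succ Fin.succ)
        = Matrix.diagonal (fun j => (X : Polynomial ℝ) - C (η j)) := by
      apply Matrix.ext
      intro a b
      by_cases h : a = b
      · subst h; rw [charmatrix_apply_eq, Matrix.diagonal_apply_eq]; rfl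
      · rw [charmatrix_apply_ne _ _ _ h, Matrix.diagonal_apply_ne _ h,
          Matrix.submatrix_apply,
          hstar _ _ (fun hc => h (Fin.succ_injective n hc)) (Fin.succ_ne_zero a)
            (Fin.succ_ne_zero b)]
        simp
    rw [hdiag, Matrix.det_diagonal]
  have hηped : (∏ j : Fin n, ((X : Polynomial ℝ) - C (η j)))
      = c * ∏ k ∈ Finset.Icc 1 r, (X - C (γ k)) := by rw [← hcp0, hcharP0]
  -- main polynomial identity
  have PIdent : c * ∏ l ∈ Finset.range (r + 1), (X - C (lam l))
      = (X - C (P 0 0)) * (c * ∏ k ∈ Finset.Icc 1 r, (X - C (γ k)))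
        - ∑ j : Fin n, C (P 0 j.succ * P j.succ 0) *
            ∏ k ∈ Finset.univ.erase j, (X - C (η k)) := by
    apply eq_of_infinite_eval_eq
    apply Set.Infinite.mono (s := (Set.range η)ᶜ)
    swap
    · exact Set.Finite.infinite_compl (Set.finite_range η)
    intro x hx
    simp only [Set.mem_compl_iff, Set.mem_range, not_exists] at hx
    have hxη : ∀ j : Fin n, x - η j ≠ 0 := fun j => sub_ne_zero.mpr (fun h => hx j h.symm)
    simp only [Set.mem_setOf_eq]
    rw [← hcharP, eval_charpoly_det]
    rw [arrow_det _ (fun a b hab => by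
        simp only [Matrix.of_apply]
        rw [if_neg (fun hc => hab (Fin.succ_injective n hc)),
          hstar _ _ (fun hc => hab (Fin.succ_injective n hc)) (Fin.succ_ne_zero a)
            (Fin.succ_ne_zero b)]
        ring)
      (fun j => by
        simp only [Matrix.of_apply, if_pos rfl]
        exact hxη j)]
    rw [eval_sub, eval_mul, ← hηped]
    simp only [Matrix.of_apply, eval_prod, eval_sub, eval_X, eval_C, eval_mul, eval_finset_sum,
      if_true, eq_self_iff_true, zero_sub, neg_mul_neg]
    congr 1
    apply Finset.sum_congr rfl
    intro j _
    rw [if_neg (fun h : (0 : Fin (n+1)) = j.succ => Fin.succ_ne_zero j h.symm),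
      if_neg (Fin.succ_ne_zero j)]
    ring
  -- multiplicity bookkeeping
  set t := Polynomial.rootMultiplicity gi c with ht
  set c₂ := c /ₘ (X - C gi) ^ t with hc₂def
  have hc0 : c ≠ 0 := hc.ne_zero
  have hfac : (X - C gi) ^ t * c₂ = c := pow_mul_divByMonic_rootMultiplicity_eq c gi
  have hc₂ : c₂.eval gi ≠ 0 := eval_divByMonic_pow_rootMultiplicity_ne_zero gi hc0
  set S : Finset (Fin n) := Finset.univ.filter (fun j => η j = gi) with hS
  set F : Polynomial ℝ := ∏ j ∈ Finset.univ.filter (fun j => ¬ η j = gi), (X - C (η j))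
    with hF0
  set G : Polynomial ℝ := c₂ * ∏ k ∈ (Finset.Icc 1 r).erase i.val, (X - C (γ k)) with hG0
  have hsplit : (∏ j : Fin n, ((X : Polynomial ℝ) - C (η j))) = (X - C gi) ^ S.card * F := by
    rw [← Finset.prod_filter_mul_prod_filter_not Finset.univ (fun j => η j = gi)]
    congr 1
    rw [Finset.prod_congr rfl (fun j hj => by rw [(Finset.mem_filter.mp hj).2]),
      Finset.prod_const]
  have hiI : i.val ∈ Finset.Icc 1 r := Finset.mem_Icc.mpr ⟨hi1, hivr⟩
  have hIccsplit : (∏ k ∈ Finset.Icc 1 r, ((X : Polynomial ℝ) - C (γ k)))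
      = (X - C gi) * ∏ k ∈ (Finset.Icc 1 r).erase i.val, (X - C (γ k)) :=
    (Finset.mul_prod_erase _ _ hiI).symm
  have hkey0 : (X - C gi) ^ S.card * F = (X - C gi) ^ (t + 1) * G := by
    rw [← hsplit, hηped, hIccsplit, ← hfac, hG0]
    ring
  have hFne : F.eval gi ≠ 0 := by
    rw [hF0, eval_prod]
    apply Finset.prod_ne_zero_iff.mpr
    intro j hj
    rw [eval_sub, eval_X, eval_C]
    exact sub_ne_zero.mpr (Ne.symm (Finset.mem_filter.mp hj).2)
  have hγsubne : ∀ k ∈ (Finset.Icc 1 r).erase i.val, gi - γ k ≠ 0 := by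
    intro k hk
    obtain ⟨hkne, hkI⟩ := Finset.mem_erase.mp hk
    obtain ⟨h1, h2⟩ := Finset.mem_Icc.mp hkI
    exact sub_ne_zero.mpr (hγne k h1 h2 hkne)
  have hGne : G.eval gi ≠ 0 := by
    rw [hG0, eval_mul, eval_prod]
    refine mul_ne_zero hc₂ (Finset.prod_ne_zero_iff.mpr fun k hk => ?_)
    rw [eval_sub, eval_X, eval_C]
    exact hγsubne k hk
  obtain ⟨hcard, hFG⟩ := pow_factor_cancel hFne hGne hkey0
  -- rewrite the big sum
  have hprodS : ∀ j ∈ S, (∏ k ∈ Finset.univ.erase j, ((X : Polynomial ℝ) - C (η k)))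
      = (X - C gi) ^ t * F := by
    intro j hj
    have h1 : (X - C (η j)) * ∏ k ∈ Finset.univ.erase j, ((X : Polynomial ℝ) - C (η k))
        = (X - C gi) ^ (t + 1) * F := by
      rw [Finset.mul_prod_erase Finset.univ (fun k => (X : Polynomial ℝ) - C (η k))
        (Finset.mem_univ j), hsplit, hcard]
    rw [(Finset.mem_filter.mp hj).2] at h1
    apply mul_left_cancel₀ (X_sub_C_ne_zero gi)
    rw [h1, pow_succ]
    ring
  have hprodNS : ∀ j ∈ Finset.univ.filter (fun j => ¬ η j = gi),
      (∏ k ∈ Finset.univ.erase j, ((X : Polynomial ℝ) - C (η k)))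
        = (X - C gi) ^ (t + 1) *
          ∏ k ∈ (Finset.univ.filter (fun k => ¬ η k = gi)).erase j, (X - C (η k)) := by
    intro j hj
    have h1 : (X - C (η j)) * ∏ k ∈ Finset.univ.erase j, ((X : Polynomial ℝ) - C (η k))
        = (X - C gi) ^ (t + 1) * F := by
      rw [Finset.mul_prod_erase Finset.univ (fun k => (X : Polynomial ℝ) - C (η k))
        (Finset.mem_univ j), hsplit, hcard]
    have h2 : F = (X - C (η j)) *
        ∏ k ∈ (Finset.univ.filter (fun k => ¬ η k = gi)).erase j, (X - C (η k)) :=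
      (Finset.mul_prod_erase _ _ hj).symm
    apply mul_left_cancel₀ (X_sub_C_ne_zero (η j))
    rw [h1, h2]
    ring
  have hsumsplit : (∑ j : Fin n, C (P 0 j.succ * P j.succ 0) *
        ∏ k ∈ Finset.univ.erase j, ((X : Polynomial ℝ) - C (η k)))
      = (X - C gi) ^ t * ((∑ j ∈ S, C (P 0 j.succ * P j.succ 0)) * F
          + (X - C gi) * ∑ j ∈ Finset.univ.filter (fun j => ¬ η j = gi),
              C (P 0 j.succ * P j.succ 0) *
                ∏ k ∈ (Finset.univ.filter (fun k => ¬ η k = gi)).erase j, (X - C (η k))) := by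
    rw [← Finset.sum_filter_add_sum_filter_not Finset.univ (fun j => η j = gi)]
    have e1 : (∑ j ∈ Finset.univ.filter (fun j => η j = gi),
          C (P 0 j.succ * P j.succ 0) * ∏ k ∈ Finset.univ.erase j, ((X : Polynomial ℝ) - C (η k)))
        = ∑ j ∈ S, C (P 0 j.succ * P j.succ 0) * ((X - C gi) ^ t * F) :=
      Finset.sum_congr rfl (fun j hj => by rw [hprodS j hj])
    have e2 : (∑ j ∈ Finset.univ.filter (fun j => ¬ η j = gi),
          C (P 0 j.succ * P j.succ 0) * ∏ k ∈ Finset.univ.erase j, ((X : Polynomial ℝ) - C (η k)))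
        = ∑ j ∈ Finset.univ.filter (fun j => ¬ η j = gi),
            C (P 0 j.succ * P j.succ 0) * ((X - C gi) ^ (t + 1) *
              ∏ k ∈ (Finset.univ.filter (fun k => ¬ η k = gi)).erase j, (X - C (η k))) :=
      Finset.sum_congr rfl (fun j hj => by rw [hprodNS j hj])
    rw [e1, e2, mul_add]
    refine congrArg₂ (· + ·) ?_ ?_
    · rw [Finset.sum_mul, Finset.mul_sum]
      exact Finset.sum_congr rfl (fun j _ => by ring)
    · rw [Finset.mul_sum, Finset.mul_sum]
      exact Finset.sum_congr rfl (fun j _ => by ring)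
  -- cancel the power and evaluate at gi
  have hmain2 : (X - C gi) ^ t * (c₂ * ∏ l ∈ Finset.range (r + 1), (X - C (lam l)))
      = (X - C gi) ^ t * ((X - C (P 0 0)) * ((X - C gi) * G)
          - (∑ j ∈ S, C (P 0 j.succ * P j.succ 0)) * F
          - (X - C gi) * ∑ j ∈ Finset.univ.filter (fun j => ¬ η j = gi),
              C (P 0 j.succ * P j.succ 0) *
                ∏ k ∈ (Finset.univ.filter (fun k => ¬ η k = gi)).erase j, (X - C (η k))) := by
    have hL : c * ∏ l ∈ Finset.range (r + 1), (X - C (lam l))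
        = (X - C gi) ^ t * (c₂ * ∏ l ∈ Finset.range (r + 1), (X - C (lam l))) := by
      rw [← hfac]; ring
    rw [← hL, PIdent, hsumsplit, hIccsplit, ← hfac, hG0]
    ring
  have hmain3 := mul_left_cancel₀ (pow_ne_zero t (X_sub_C_ne_zero gi)) hmain2
  have hev := congrArg (Polynomial.eval gi) hmain3
  simp only [eval_mul, eval_sub, eval_X, eval_C, sub_self, zero_mul, mul_zero, eval_prod,
    eval_finset_sum, eval_pow, zero_sub, neg_mul, neg_zero, sub_zero, eval_add] at hev
  have hGev : G.eval gi = c₂.eval gi * ∏ k ∈ (Finset.Icc 1 r).erase i.val, (gi - γ k) := by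
    rw [hG0, eval_mul, eval_prod]
    simp only [eval_sub, eval_X, eval_C]
  have hFev : F.eval gi = c₂.eval gi * ∏ k ∈ (Finset.Icc 1 r).erase i.val, (gi - γ k) := by
    rw [hFG, hGev]
  have KEY : (∏ l ∈ Finset.range (r + 1), (gi - lam l))
      = -((∑ j ∈ S, P 0 j.succ * P j.succ 0) *
          ∏ k ∈ (Finset.Icc 1 r).erase i.val, (gi - γ k)) := by
    apply mul_left_cancel₀ hc₂
    rw [hev, hFev]
    ring
  -- leaves in S exit to the hub with probability 1 - gi
  have hleaf : ∀ j ∈ S, P j.succ 0 = 1 - gi := by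
    intro j hj
    have hrow := hP_row j.succ
    rw [Fin.sum_univ_succ] at hrow
    have hz : (∑ k : Fin n, P j.succ k.succ) = P j.succ j.succ := by
      refine Finset.sum_eq_single j (fun k _ hk => ?_) (by simp)
      exact hstar _ _ (fun hh => hk (Fin.succ_injective n hh).symm) (Fin.succ_ne_zero j)
        (Fin.succ_ne_zero k)
    rw [hz] at hrow
    have hjg : P j.succ j.succ = gi := (Finset.mem_filter.mp hj).2
    linarith [hrow, hjg.ge, hjg.le]
  have hBreal : (∑ j ∈ S, P 0 j.succ * P j.succ 0) = (1 - gi) * ∑ j ∈ S, P 0 j.succ := by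
    rw [Finset.mul_sum]
    exact Finset.sum_congr rfl (fun j hj => by rw [hleaf j hj]; ring)
  have hprodIccrange : (∏ l ∈ Finset.range (r + 1), (gi - lam l))
      = -((1 - gi) * ∏ l ∈ Finset.Icc 1 r, (gi - lam l)) := by
    have hrange : Finset.range (r + 1) = insert 0 (Finset.Icc 1 r) := by
      ext x
      simp only [Finset.mem_range, Finset.mem_insert, Finset.mem_Icc]
      omega
    rw [hrange, Finset.prod_insert (by simp), hlam0]
    ring
  have hPerase_ne : (∏ k ∈ (Finset.Icc 1 r).erase i.val, (gi - γ k)) ≠ 0 :=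
    Finset.prod_ne_zero_iff.mpr hγsubne
  have h1gi : (1 : ℝ) - gi ≠ 0 := sub_ne_zero.mpr hgi1.ne'
  have hSsum : (∑ j ∈ S, P 0 j.succ) * (∏ k ∈ (Finset.Icc 1 r).erase i.val, (gi - γ k))
      = ∏ l ∈ Finset.Icc 1 r, (gi - lam l) := by
    apply mul_left_cancel₀ h1gi
    linear_combination KEY - hprodIccrange
      - (∏ k ∈ (Finset.Icc 1 r).erase i.val, (gi - γ k)) * hBreal
  have hSsum' : (∑ j ∈ S, P 0 j.succ)
      = (∏ l ∈ Finset.Icc 1 r, (gi - lam l)) /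
          (∏ k ∈ (Finset.Icc 1 r).erase i.val, (gi - γ k)) :=
    (eq_div_iff hPerase_ne).mpr hSsum
  -- identify the goal's sum with the sum over S
  have hRHS : (∑ j ∈ Finset.univ.filter (fun j : Fin (n + 1) => j ≠ 0 ∧ P j j = gi), P 0 j)
      = ∑ j ∈ S, P 0 j.succ := by
    rw [Finset.sum_filter, Fin.sum_univ_succ, if_neg (by simp), zero_add]
    have e3 : ∀ j : Fin n, (if (j.succ ≠ 0 ∧ P j.succ j.succ = gi) then P 0 j.succ else 0)
        = if η j = gi then P 0 j.succ else 0 := fun j => by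
      simp [Fin.succ_ne_zero j]; rfl
    rw [Finset.sum_congr rfl (fun j _ => e3 j), ← Finset.sum_filter]
  -- compute the star-chain entry
  have hi0 : i.val ≠ 0 := by omega
  have hl1iv : (1 : ℝ) - lam i.val ≠ 0 := sub_ne_zero.mpr (hl1 i.val hi1 hivr).ne'
  have hPstar : Pstar r γ lam 0 i = (1 - gi) * pistar γ lam r i.val / pistar γ lam r 0 := by
    simp [Pstar, hi0, hi]; rfl
  have hpistar0 : pistar γ lam r 0 = ∏ j ∈ Finset.Icc 1 r, ((1 - γ j) / (1 - lam j)) := by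
    simp [pistar, rho]
  have hpistari : pistar γ lam r i.val
      = ((gi - lam i.val) / (1 - lam i.val)) *
          ∏ j ∈ (Finset.Icc 1 r).erase i.val,
            (((1 - γ j) * (gi - lam j)) / ((1 - lam j) * (gi - γ j))) := by
    rw [pistar, if_neg hi0, if_pos hivr]
    congr 1
    · rw [rho]
      field_simp
      rw [hgi]; ring
    · refine Finset.prod_congr rfl fun j hj => ?_
      have hj1 : (1 : ℝ) - lam j ≠ 0 := by
        obtain ⟨-, hjI⟩ := Finset.mem_erase.mp hj
        obtain ⟨ha, hb⟩ := Finset.mem_Icc.mp hjI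
        exact sub_ne_zero.mpr (hl1 j ha hb).ne'
      rw [rho]
      rw [div_eq_div_iff (by exact sub_ne_zero.mpr (Ne.symm (by
        obtain ⟨hkne, hkI⟩ := Finset.mem_erase.mp hj
        obtain ⟨h1, h2⟩ := Finset.mem_Icc.mp hkI
        exact (hγne j h1 h2 hkne).symm))) (mul_ne_zero hj1 (hγsubne j hj))]
      field_simp
      ring
  -- nonvanishing of the auxiliary products
  have hmemIcc : ∀ j ∈ (Finset.Icc 1 r).erase i.val, 1 ≤ j ∧ j ≤ r := fun j hj => by
    obtain ⟨-, hjI⟩ := Finset.mem_erase.mp hj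
    exact Finset.mem_Icc.mp hjI
  have n4 : (∏ j ∈ (Finset.Icc 1 r).erase i.val, ((1:ℝ) - γ j)) ≠ 0 :=
    Finset.prod_ne_zero_iff.mpr fun j hj =>
      sub_ne_zero.mpr (hγ1 j (hmemIcc j hj).1 (hmemIcc j hj).2).ne'
  have n5 : (∏ j ∈ (Finset.Icc 1 r).erase i.val, ((1:ℝ) - lam j)) ≠ 0 :=
    Finset.prod_ne_zero_iff.mpr fun j hj =>
      sub_ne_zero.mpr (hl1 j (hmemIcc j hj).1 (hmemIcc j hj).2).ne'
  have r1 : (∏ j ∈ Finset.Icc 1 r, ((1:ℝ) - γ j))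
      = (1 - gi) * ∏ j ∈ (Finset.Icc 1 r).erase i.val, (1 - γ j) :=
    (Finset.mul_prod_erase _ _ hiI).symm
  have r2 : (∏ j ∈ Finset.Icc 1 r, ((1:ℝ) - lam j))
      = (1 - lam i.val) * ∏ j ∈ (Finset.Icc 1 r).erase i.val, (1 - lam j) :=
    (Finset.mul_prod_erase _ _ hiI).symm
  have r3 : (∏ l ∈ Finset.Icc 1 r, (gi - lam l))
      = (gi - lam i.val) * ∏ l ∈ (Finset.Icc 1 r).erase i.val, (gi - lam l) :=
    (Finset.mul_prod_erase _ _ hiI).symm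
  rw [hPstar, hpistari, hpistar0, hRHS, hSsum', r3]
  rw [Finset.prod_div_distrib, Finset.prod_div_distrib, Finset.prod_mul_distrib,
    Finset.prod_mul_distrib, r1, r2]
  field_simp
end
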